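/- Let φ ∈ Möb(B), ζ ∈ S, and δ > 1. Then φ(Γ_δ(ζ)) ⊆ Γ_{δ̃}(φ(ζ)), where δ̃ := δ·(1+|φ(0)|)/(1−|φ(0)|) and φ also denotes the extension of φ to the closed unit ball. -/

import Mathlib

open MeasureTheory Metric Set Filter
open scoped ENNReal NNReal Topology InnerProductSpace Classical

noncomputable section

/-- Euclidean space `ℝⁿ`. -/
abbrev Eucl (n : ℕ) := EuclideanSpace ℝ (Fin n)

/-- The open unit ball `B` in `ℝⁿ`. -/
def uBall (n : ℕ) : Set (Eucl n) := Metric.ball 0 1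

/-- The unit sphere `S = ∂B` in `ℝⁿ`. -/
def uSphere (n : ℕ) : Set (Eucl n) := Metric.sphere 0 1

/-- The normalized surface area measure `σ` on the unit sphere (as a measure on `ℝⁿ`
supported on `S`), normalized so that `σ(S) = 1`. -/
def sphMeasure (n : ℕ) : Measure (Eucl n) :=
  ((Measure.hausdorffMeasure ((n : ℝ) - 1) (uSphere n))⁻¹ : ℝ≥0∞) •
    (Measure.hausdorffMeasure ((n : ℝ) - 1) : Measure (Eucl n)).restrict (uSphere n)

/-- `i`-th standard basis vector of `ℝⁿ`. -/
def basisV (n : ℕ) (i : Fin n) : Eucl n := EuclideanSpace.single i 1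

/-- The Laplacian `Δf(x) = ∑ᵢ ∂²f/∂xᵢ²(x)`. -/
def lap {n : ℕ} {F : Type*} [NormedAddCommGroup F] [NormedSpace ℝ F]
    (f : Eucl n → F) (x : Eucl n) : F :=
  ∑ i : Fin n, iteratedFDeriv ℝ 2 f x ![basisV n i, basisV n i]

/-- `f` is harmonic on `s`: twice continuously differentiable with vanishing Laplacian. -/
def HarmOn {n : ℕ} {F : Type*} [NormedAddCommGroup F] [NormedSpace ℝ F]
    (f : Eucl n → F) (s : Set (Eucl n)) : Prop :=
  ContDiffOn ℝ 2 f s ∧ ∀ x ∈ s, lap f x = 0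

/-- The Jacobian matrix `Dφ(x) = (∂φ⁽ⁱ⁾/∂xⱼ)` of a map `φ : ℝⁿ → ℝⁿ`. -/
def jacMatrix {n : ℕ} (φ : Eucl n → Eucl n) (x : Eucl n) : Matrix (Fin n) (Fin n) ℝ :=
  Matrix.of fun i j => fderiv ℝ φ x (basisV n j) i

/-- `|Dφ(x)| := |J_φ(x)|^{1/n}`, where `J_φ` is the Jacobian determinant. -/
def normDeriv {n : ℕ} (φ : Eucl n → Eucl n) (x : Eucl n) : ℝ :=
  |(jacMatrix φ x).det| ^ ((n : ℝ)⁻¹)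

/-- The weighted composition operator `W_{φ,ψ} f = ψ · (f ∘ φ)`. -/
def wco {n : ℕ} (φ : Eucl n → Eucl n) (ψ : Eucl n → ℂ) (f : Eucl n → ℂ) : Eucl n → ℂ :=
  fun x => ψ x * f (φ x)

/-- The set of values `(∫_S |f(rζ)|^p dσ(ζ))^{1/p}`, `0 ≤ r < 1`. -/
def hpNormSet (n : ℕ) (p : ℝ) (f : Eucl n → ℂ) : Set ℝ :=
  (fun r : ℝ => (∫ ζ, ‖f (r • ζ)‖ ^ p ∂(sphMeasure n)) ^ (1 / p)) '' Set.Ico (0 : ℝ) 1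

/-- The set of values `|f(x)|`, `x ∈ B`. -/
def hInfSet (n : ℕ) (f : Eucl n → ℂ) : Set ℝ := (fun x => ‖f x‖) '' uBall n

/-- Membership in the harmonic Hardy space `h^p(B)`, `1 ≤ p ≤ ∞`. -/
def MemHp (n : ℕ) (p : ℝ≥0∞) (f : Eucl n → ℂ) : Prop :=
  HarmOn f (uBall n) ∧
    if p = ⊤ then BddAbove (hInfSet n f) else BddAbove (hpNormSet n p.toReal f)

/-- The `h^p(B)` norm, `1 ≤ p ≤ ∞`. -/
def hpNorm (n : ℕ) (p : ℝ≥0∞) (f : Eucl n → ℂ) : ℝ :=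
  if p = ⊤ then sSup (hInfSet n f) else sSup (hpNormSet n p.toReal f)

/-- The operator norm of a map `T` on `h^p(B)`. -/
def opNormHp (n : ℕ) (p : ℝ≥0∞) (T : (Eucl n → ℂ) → (Eucl n → ℂ)) : ℝ :=
  sInf {C : ℝ | 0 ≤ C ∧ ∀ f, MemHp n p f → hpNorm n p (T f) ≤ C * hpNorm n p f}

/-- The one-point compactification `ℝ̂ⁿ = ℝⁿ ∪ {∞}`. -/
abbrev EuclHat (n : ℕ) := OnePoint (Eucl n)

/-- Reflection in the sphere `S(a, r)`, as a self-map of `ℝ̂ⁿ`: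
`x ↦ a + r²(x−a)/|x−a|²`, with `a ↦ ∞` and `∞ ↦ a`. -/
def sphereRefl (n : ℕ) (a : Eucl n) (r : ℝ) : EuclHat n → EuclHat n :=
  OnePoint.rec (↑a)
    (fun x => if x = a then OnePoint.infty
      else ↑(a + (r ^ 2 / ‖x - a‖ ^ 2) • (x - a)))

/-- Reflection in the hyperplane `{x : x·a = t}` (`a` a unit vector), as a self-map of `ℝ̂ⁿ`:
`x ↦ x − 2(x·a − t)a`, with `∞ ↦ ∞`. -/
def hyperRefl (n : ℕ) (a : Eucl n) (t : ℝ) : EuclHat n → EuclHat n :=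
  OnePoint.rec OnePoint.infty
    (fun x => ↑(x - (2 * (⟪x, a⟫_ℝ - t)) • a))

/-- A reflection of `ℝ̂ⁿ` in a sphere or a hyperplane. -/
def IsReflection (n : ℕ) (f : EuclHat n → EuclHat n) : Prop :=
  (∃ a r, 0 < r ∧ f = sphereRefl n a r) ∨
    (∃ a t, ‖a‖ = 1 ∧ f = hyperRefl n a t)

/-- A Möbius transformation of `ℝ̂ⁿ`: a finite composition of reflections in
spheres or hyperplanes. -/
def IsMobiusHat (n : ℕ) (g : EuclHat n → EuclHat n) : Prop :=
  ∃ L : List (EuclHat n → EuclHat n), L ≠ [] ∧ (∀ f ∈ L, IsReflection n f) ∧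
    g = L.foldr (· ∘ ·) id

/-- `φ : ℝⁿ → ℝⁿ` is, on `Ω`, the restriction of a Möbius transformation of `ℝ̂ⁿ`. -/
def IsMobiusRestr (n : ℕ) (φ : Eucl n → Eucl n) (Ω : Set (Eucl n)) : Prop :=
  ∃ g : EuclHat n → EuclHat n, IsMobiusHat n g ∧ ∀ x ∈ Ω, g ↑x = ↑(φ x)

/-- `φ ∈ Möb(B)`: `φ` agrees, on an open neighborhood of the closed unit ball, with a
Möbius transformation of `ℝ̂ⁿ`, and `φ` maps `B` bijectively onto `B`.  (Such a `φ` is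
the canonical extension of the Möbius transformation to the closed unit ball.) -/
def IsMobiusBall (n : ℕ) (φ : Eucl n → Eucl n) : Prop :=
  (∃ U : Set (Eucl n), IsOpen U ∧ Metric.closedBall 0 1 ⊆ U ∧ IsMobiusRestr n φ U) ∧
    Set.BijOn φ (uBall n) (uBall n)

/-- The nontangential approach region `Γ_δ(ζ) = {x ∈ B : |x − ζ| < (δ/2)(1 − |x|²)}`. -/
def ntRegion (n : ℕ) (δ : ℝ) (ζ : Eucl n) : Set (Eucl n) :=
  {x | x ∈ uBall n ∧ ‖x - ζ‖ < δ / 2 * (1 - ‖x‖ ^ 2)}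

/-- `g` has nontangential limit `L` at `ζ ∈ S`. -/
def HasNTLimit (n : ℕ) (g : Eucl n → ℂ) (ζ : Eucl n) (L : ℂ) : Prop :=
  ∀ δ : ℝ, 1 < δ → Filter.Tendsto g (nhdsWithin ζ (ntRegion n δ ζ)) (nhds L)

/-- The Poisson kernel `P(x, ζ) = (1 − |x|²)/|x − ζ|ⁿ` for the unit ball. -/
def poissonK (n : ℕ) (x ζ : Eucl n) : ℝ := (1 - ‖x‖ ^ 2) / ‖x - ζ‖ ^ n

/-- The extended Poisson kernel `P_y(x) = (1 − |x|²|y|²)/(1 − 2x·y + |x|²|y|²)^{n/2}`. -/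
def extPoisson (n : ℕ) (y x : Eucl n) : ℝ :=
  (1 - ‖x‖ ^ 2 * ‖y‖ ^ 2) / (1 - 2 * ⟪x, y⟫_ℝ + ‖x‖ ^ 2 * ‖y‖ ^ 2) ^ ((n : ℝ) / 2)

/-- The Gauss hypergeometric function `₂F₁(a, b; c; r) = ∑ₖ (a)ₖ(b)ₖ/((c)ₖ k!) rᵏ`. -/
def gaussHyper (a b c r : ℝ) : ℝ :=
  ∑' k : ℕ, ((ascPochhammer ℝ k).eval a * (ascPochhammer ℝ k).eval b) /
    ((ascPochhammer ℝ k).eval c * (Nat.factorial k)) * r ^ k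

/-- A linear operator on (the function class) `h^p(B)`. -/
def IsLinOnHp (n : ℕ) (p : ℝ≥0∞) (T : (Eucl n → ℂ) → (Eucl n → ℂ)) : Prop :=
  (∀ f, MemHp n p f → MemHp n p (T f)) ∧
    (∀ f g, MemHp n p f → MemHp n p g → T (f + g) = T f + T g) ∧
    (∀ (c : ℂ) (f), MemHp n p f → T (c • f) = c • T f)

/-- A compact operator on `h^p(B)`: a linear operator mapping the unit ball of `h^p(B)`
to a totally bounded set. -/
def IsCompactOnHp (n : ℕ) (p : ℝ≥0∞) (K : (Eucl n → ℂ) → (Eucl n → ℂ)) : Prop :=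
  IsLinOnHp n p K ∧
    ∀ ε : ℝ, 0 < ε → ∃ G : Finset (Eucl n → ℂ),
      ∀ f, MemHp n p f → hpNorm n p f ≤ 1 → ∃ g ∈ G, hpNorm n p (K f - g) ≤ ε

/-- The essential norm of an operator `T` on `h^p(B)`: the distance, in operator norm,
from `T` to the compact operators on `h^p(B)`. -/
def essNormHp (n : ℕ) (p : ℝ≥0∞) (T : (Eucl n → ℂ) → (Eucl n → ℂ)) : ℝ :=
  sInf {c : ℝ | ∃ K, IsCompactOnHp n p K ∧ opNormHp n p (fun f => T f - K f) = c}

/-- The duality pairing `⟨f, g⟩ = ∫_S f* g* dσ`, relative to a boundary-function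
assignment `bd`. -/
def hpPairing (n : ℕ) (bd : (Eucl n → ℂ) → (Eucl n → ℂ)) (f g : Eucl n → ℂ) : ℂ :=
  ∫ ζ, bd f ζ * bd g ζ ∂(sphMeasure n)

end


noncomputable section AuxA

open OnePoint

variable {n : ℕ}

/-- Finite part of a sphere reflection. -/
def spfin (a : Eucl n) (r : ℝ) (u : Eucl n) : Eucl n :=
  a + (r ^ 2 / ‖u - a‖ ^ 2) • (u - a)

/-- Finite part of a hyperplane reflection. -/
def hyfin (a : Eucl n) (t : ℝ) (u : Eucl n) : Eucl n :=
  u - (2 * (⟪u, a⟫_ℝ - t)) • a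

lemma sphereRefl_coe (a x : Eucl n) (r : ℝ) :
    sphereRefl n a r ↑x
      = if x = a then (OnePoint.infty : EuclHat n) else (↑(spfin a r x) : EuclHat n) := rfl

lemma sphereRefl_coe_ne {x a : Eucl n} (r : ℝ) (h : x ≠ a) :
    sphereRefl n a r ↑x = (↑(spfin a r x) : EuclHat n) := by
  rw [sphereRefl_coe, if_neg h]

lemma sphereRefl_coe_self (a : Eucl n) (r : ℝ) :
    sphereRefl n a r ↑a = (OnePoint.infty : EuclHat n) := by
  rw [sphereRefl_coe, if_pos rfl]

lemma sphereRefl_infty (a : Eucl n) (r : ℝ) :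
    sphereRefl n a r OnePoint.infty = (↑a : EuclHat n) := rfl

lemma hyperRefl_coe (a x : Eucl n) (t : ℝ) :
    hyperRefl n a t ↑x = (↑(hyfin a t x) : EuclHat n) := rfl

lemma hyperRefl_infty (a : Eucl n) (t : ℝ) :
    hyperRefl n a t OnePoint.infty = (OnePoint.infty : EuclHat n) := rfl

lemma norm_eq_of_sq_eq {x y : ℝ} (hx : 0 ≤ x) (hy : 0 ≤ y) (h : x ^ 2 = y ^ 2) : x = y := by
  calc x = Real.sqrt (x ^ 2) := (Real.sqrt_sq hx).symm
  _ = Real.sqrt (y ^ 2) := by rw [h]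
  _ = y := Real.sqrt_sq hy

lemma norm_sq_pos_of_ne {u a : Eucl n} (h : u ≠ a) : 0 < ‖u - a‖ ^ 2 :=
  pow_pos (norm_pos_iff.2 (sub_ne_zero.2 h)) 2

lemma spfin_sub (a : Eucl n) (r : ℝ) (u : Eucl n) :
    spfin a r u - a = (r ^ 2 / ‖u - a‖ ^ 2) • (u - a) := by
  simp [spfin]

lemma norm_spfin_sub (a : Eucl n) (r : ℝ) (u : Eucl n) :
    ‖spfin a r u - a‖ = r ^ 2 / ‖u - a‖ := by
  rw [spfin_sub, norm_smul, Real.norm_eq_abs, abs_of_nonneg (by positivity)]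
  rcases eq_or_ne u a with h | h
  · simp [h]
  · have h2 : ‖u - a‖ ≠ 0 := fun h0 => h (sub_eq_zero.1 (norm_eq_zero.1 h0))
    field_simp

lemma spfin_ne {u a : Eucl n} {r : ℝ} (hr : 0 < r) (h : u ≠ a) : spfin a r u ≠ a := by
  intro h0
  have h1 : ‖spfin a r u - a‖ = 0 := by rw [h0, sub_self, norm_zero]
  rw [norm_spfin_sub] at h1
  have h2 : ‖u - a‖ ≠ 0 := fun h0 => h (sub_eq_zero.1 (norm_eq_zero.1 h0))
  have h2' : 0 < ‖u - a‖ := norm_pos_iff.2 (sub_ne_zero.2 h)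
  have h3 : 0 < r ^ 2 / ‖u - a‖ := by positivity
  linarith [h1 ▸ h3]

lemma spfin_invol {u a : Eucl n} {r : ℝ} (hr : 0 < r) (h : u ≠ a) :
    spfin a r (spfin a r u) = u := by
  have h2 : ‖u - a‖ ≠ 0 := fun h0 => h (sub_eq_zero.1 (norm_eq_zero.1 h0))
  have hr2 : r ^ 2 ≠ 0 := by positivity
  have key : ‖spfin a r u - a‖ ^ 2 = r ^ 4 / ‖u - a‖ ^ 2 := by
    rw [norm_spfin_sub]; field_simp
  show a + (r ^ 2 / ‖spfin a r u - a‖ ^ 2) • (spfin a r u - a) = u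
  rw [key, spfin_sub, smul_smul]
  have hc : r ^ 2 / (r ^ 4 / ‖u - a‖ ^ 2) * (r ^ 2 / ‖u - a‖ ^ 2) = 1 := by
    field_simp
  rw [hc, one_smul, add_sub_cancel]

lemma inv_dist_core {p q : Eucl n} (r : ℝ) (hp : p ≠ 0) (hq : q ≠ 0) :
    ‖(r ^ 2 / ‖p‖ ^ 2) • p - (r ^ 2 / ‖q‖ ^ 2) • q‖ ^ 2
      = (r ^ 2 / ‖p‖ ^ 2) * (r ^ 2 / ‖q‖ ^ 2) * ‖p - q‖ ^ 2 := by
  have hp2 : ‖p‖ ^ 2 ≠ 0 := by have := norm_pos_iff.2 hp; positivity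
  have hq2 : ‖q‖ ^ 2 ≠ 0 := by have := norm_pos_iff.2 hq; positivity
  have e1 : ‖(r ^ 2 / ‖p‖ ^ 2) • p - (r ^ 2 / ‖q‖ ^ 2) • q‖ ^ 2
      = (r ^ 2 / ‖p‖ ^ 2) ^ 2 * ‖p‖ ^ 2
        - 2 * ((r ^ 2 / ‖p‖ ^ 2) * ((r ^ 2 / ‖q‖ ^ 2) * ⟪p, q⟫_ℝ))
        + (r ^ 2 / ‖q‖ ^ 2) ^ 2 * ‖q‖ ^ 2 := by
    rw [norm_sub_sq_real, real_inner_smul_left, real_inner_smul_right, norm_smul, norm_smul,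
      Real.norm_eq_abs, Real.norm_eq_abs, abs_of_nonneg (show (0:ℝ) ≤ r ^ 2 / ‖p‖ ^ 2 by positivity),
      abs_of_nonneg (show (0:ℝ) ≤ r ^ 2 / ‖q‖ ^ 2 by positivity), mul_pow, mul_pow]
  have e2 : ‖p - q‖ ^ 2 = ‖p‖ ^ 2 - 2 * ⟪p, q⟫_ℝ + ‖q‖ ^ 2 := norm_sub_sq_real p q
  rw [e1, e2]
  field_simp
  ring

lemma sphere_dist {u v a : Eucl n} {r : ℝ} (hr : 0 < r) (hu : u ≠ a) (hv : v ≠ a) :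
    ‖spfin a r u - spfin a r v‖ ^ 2
      = (r ^ 2 / ‖u - a‖ ^ 2) * (r ^ 2 / ‖v - a‖ ^ 2) * ‖u - v‖ ^ 2 := by
  have hd : spfin a r u - spfin a r v
      = (r ^ 2 / ‖u - a‖ ^ 2) • (u - a) - (r ^ 2 / ‖v - a‖ ^ 2) • (v - a) := by
    simp only [spfin]; abel
  calc ‖spfin a r u - spfin a r v‖ ^ 2
      = ‖(r ^ 2 / ‖u - a‖ ^ 2) • (u - a) - (r ^ 2 / ‖v - a‖ ^ 2) • (v - a)‖ ^ 2 := by rw [hd]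
    _ = (r ^ 2 / ‖u - a‖ ^ 2) * (r ^ 2 / ‖v - a‖ ^ 2) * ‖(u - a) - (v - a)‖ ^ 2 :=
        inv_dist_core r (sub_ne_zero.2 hu) (sub_ne_zero.2 hv)
    _ = (r ^ 2 / ‖u - a‖ ^ 2) * (r ^ 2 / ‖v - a‖ ^ 2) * ‖u - v‖ ^ 2 := by
        rw [show (u - a) - (v - a) = u - v from by abel]

lemma spfin_dist_pb {u a : Eucl n} (c : Eucl n) {r : ℝ} (hr : 0 < r) (hu : u ≠ a) :
    ‖spfin a r u - c‖ ^ 2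
      = (r ^ 2 / ‖u - a‖ ^ 2) *
        ((‖a - c‖ ^ 2 / r ^ 2) * ‖u - a‖ ^ 2 + 2 * ⟪a - c, u - a⟫_ℝ + r ^ 2) := by
  have hu2 : ‖u - a‖ ^ 2 ≠ 0 := (norm_sq_pos_of_ne hu).ne'
  have hr2 : r ^ 2 ≠ 0 := by positivity
  have hd : spfin a r u - c = (a - c) + (r ^ 2 / ‖u - a‖ ^ 2) • (u - a) := by
    simp only [spfin]; abel
  rw [hd, norm_add_sq_real, real_inner_smul_right, norm_smul, Real.norm_eq_abs,
    abs_of_nonneg (show (0:ℝ) ≤ r ^ 2 / ‖u - a‖ ^ 2 by positivity), mul_pow]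
  have hu1 : ‖u - a‖ ≠ 0 := norm_ne_zero_iff.2 (sub_ne_zero.2 hu)
  field_simp

lemma continuousAt_spfin {u a : Eucl n} (r : ℝ) (h : u ≠ a) :
    ContinuousAt (spfin a r) u := by
  have h1 : ContinuousAt (fun x : Eucl n => ‖x - a‖ ^ 2) u :=
    (((continuous_id.sub continuous_const).norm).pow 2).continuousAt
  have h2 : ContinuousAt (fun x : Eucl n => r ^ 2 / ‖x - a‖ ^ 2) u :=
    (continuousAt_const.div h1 (norm_sq_pos_of_ne h).ne')
  exact continuousAt_const.add (h2.smul ((continuous_id.sub continuous_const).continuousAt))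

lemma hyfin_sub {a : Eucl n} (t : ℝ) (u v : Eucl n) :
    hyfin a t u - hyfin a t v = (u - v) - (2 * ⟪u - v, a⟫_ℝ) • a := by
  simp only [hyfin, inner_sub_left]
  module

lemma hyfin_isometry {a : Eucl n} (ha : ‖a‖ = 1) (t : ℝ) (u v : Eucl n) :
    ‖hyfin a t u - hyfin a t v‖ = ‖u - v‖ := by
  apply norm_eq_of_sq_eq (norm_nonneg _) (norm_nonneg _)
  rw [hyfin_sub, norm_sub_sq_real, real_inner_smul_right, norm_smul, Real.norm_eq_abs, mul_pow,
    ha, sq_abs]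
  ring

lemma hyfin_invol {a : Eucl n} (ha : ‖a‖ = 1) (t : ℝ) (u : Eucl n) :
    hyfin a t (hyfin a t u) = u := by
  have h1 : ⟪hyfin a t u, a⟫_ℝ = 2 * t - ⟪u, a⟫_ℝ := by
    have : ⟪a, a⟫_ℝ = 1 := by rw [real_inner_self_eq_norm_sq, ha]; norm_num
    simp only [hyfin, inner_sub_left, real_inner_smul_left, this]
    ring
  show hyfin a t u - (2 * (⟪hyfin a t u, a⟫_ℝ - t)) • a = u
  rw [h1]
  simp only [hyfin]
  module

lemma continuous_hyfin (a : Eucl n) (t : ℝ) : Continuous (hyfin a t) := by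
  apply continuous_id.sub
  exact (continuous_const.mul ((Continuous.inner (𝕜 := ℝ) continuous_id continuous_const).sub
    continuous_const)).smul continuous_const

lemma isReflection_involutive {f : EuclHat n → EuclHat n} (hf : IsReflection n f) :
    Function.Involutive f := by
  rcases hf with ⟨a, r, hr, rfl⟩ | ⟨a, t, ha, rfl⟩
  · intro z
    induction z using OnePoint.rec with
    | infty => rw [sphereRefl_infty, sphereRefl_coe_self]
    | coe x =>
      rcases eq_or_ne x a with h | h
      · rw [h, sphereRefl_coe_self, sphereRefl_infty]
      · rw [sphereRefl_coe_ne r h, sphereRefl_coe_ne r (spfin_ne hr h), spfin_invol hr h]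
  · intro z
    induction z using OnePoint.rec with
    | infty => rw [hyperRefl_infty, hyperRefl_infty]
    | coe x => rw [hyperRefl_coe, hyperRefl_coe, hyfin_invol ha]

lemma foldr_append_comp (L1 L2 : List (EuclHat n → EuclHat n)) :
    (L1 ++ L2).foldr (· ∘ ·) id = (L1.foldr (· ∘ ·) id) ∘ (L2.foldr (· ∘ ·) id) := by
  induction L1 with
  | nil => rfl
  | cons f T ih => simp [List.foldr_cons, ih]; rfl

lemma chain_left_inv {L : List (EuclHat n → EuclHat n)}
    (hL : ∀ f ∈ L, Function.Involutive f) (z : EuclHat n) :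
    (L.reverse.foldr (· ∘ ·) id) ((L.foldr (· ∘ ·) id) z) = z := by
  induction L generalizing z with
  | nil => rfl
  | cons f T ih =>
    have hf : Function.Involutive f := hL f (List.mem_cons_self)
    have hT : ∀ f ∈ T, Function.Involutive f := fun f hf => hL f (List.mem_cons_of_mem _ hf)
    have : (f :: T).reverse = T.reverse ++ [f] := by simp
    rw [this, foldr_append_comp]
    show (T.reverse.foldr (· ∘ ·) id) ((([f].foldr (· ∘ ·) id)) (f ((T.foldr (· ∘ ·) id) z)))
      = z
    show (T.reverse.foldr (· ∘ ·) id) (f (f ((T.foldr (· ∘ ·) id) z))) = z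
    rw [hf ((T.foldr (· ∘ ·) id) z)]
    exact ih hT z

end AuxA


set_option maxHeartbeats 1000000

noncomputable section AuxB

open OnePoint

variable {n : ℕ}

/-- A function `F` "pulls back" to a `μ`-multiple of a quadratic polynomial off `E`. -/
def IsPB (E : Set (Eucl n)) (μ : Eucl n → ℝ) (F : Eucl n → ℝ) : Prop :=
  ∃ α γ : ℝ, ∃ β : Eucl n, ∀ x, x ∉ E → F x = μ x * (α * ‖x‖ ^ 2 + ⟪β, x⟫_ℝ + γ)

lemma IsPB.lc {E : Set (Eucl n)} {μ F1 F2 : Eucl n → ℝ} (h1 : IsPB E μ F1) (h2 : IsPB E μ F2)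
    (c1 c2 : ℝ) : IsPB E μ (fun x => c1 * F1 x + c2 * F2 x) := by
  obtain ⟨α1, γ1, β1, h1⟩ := h1
  obtain ⟨α2, γ2, β2, h2⟩ := h2
  refine ⟨c1 * α1 + c2 * α2, c1 * γ1 + c2 * γ2, c1 • β1 + c2 • β2, fun x hx => ?_⟩
  show c1 * F1 x + c2 * F2 x = _
  rw [h1 x hx, h2 x hx, inner_add_left, real_inner_smul_left, real_inner_smul_left]
  ring

lemma IsPB.congr {E : Set (Eucl n)} {μ F F' : Eucl n → ℝ} (h : IsPB E μ F)
    (he : ∀ x, x ∉ E → F' x = F x) : IsPB E μ F' := by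
  obtain ⟨α, γ, β, h⟩ := h
  exact ⟨α, γ, β, fun x hx => by rw [he x hx, h x hx]⟩

lemma IsPB.scale {E E' : Set (Eucl n)} {μ l F H : Eucl n → ℝ} (hs : E ⊆ E') (hH : IsPB E μ H)
    (he : ∀ x, x ∉ E' → F x = l x * H x) : IsPB E' (fun x => μ x * l x) F := by
  obtain ⟨α, γ, β, h⟩ := hH
  exact ⟨α, γ, β, fun x hx => by rw [he x hx, h x (fun hxE => hx (hs hxE))]; ring⟩

/-- All data attached to a finite composition of reflections: the finite "bad set" `E`
(where the chain passes through `∞`), the finite realization `G`, the conformal factor `μ`,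
the two fundamental identities, and continuity/limit information. -/
structure ChainData (n : ℕ) (g : EuclHat n → EuclHat n) where
  E : Set (Eucl n)
  G : Eucl n → Eucl n
  μ : Eucl n → ℝ
  hEfin : E.Finite
  hfin : ∀ x, x ∉ E → g ↑x = ↑(G x)
  hμpos : ∀ x, x ∉ E → 0 < μ x
  hI1 : ∀ x, x ∉ E → ∀ y, y ∉ E → ‖G x - G y‖ ^ 2 = μ x * μ y * ‖x - y‖ ^ 2
  hPB : ∀ c : Eucl n, IsPB E μ (fun x => ‖G x - c‖ ^ 2)
  hPBone : IsPB E μ (fun _ => (1 : ℝ))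
  hGcont : ContinuousOn G Eᶜ
  hμcont : ContinuousOn μ Eᶜ
  htends : ∀ e ∈ E, ∀ w : Eucl n, g ↑e = ↑w → Tendsto G (𝓝[Eᶜ] e) (𝓝 w)
  hinfty : ∀ e ∈ E, g ↑e = OnePoint.infty → Tendsto (fun x => ‖G x‖) (𝓝[Eᶜ] e) atTop

lemma ChainData.hGinj {g : EuclHat n → EuclHat n} (cd : ChainData n g) :
    ∀ x, x ∉ cd.E → ∀ y, y ∉ cd.E → cd.G x = cd.G y → x = y := by
  intro x hx y hy hxy
  by_contra hne
  have h := cd.hI1 x hx y hy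
  rw [hxy, sub_self, norm_zero] at h
  norm_num at h
  rcases h with (h | h) | h
  · exact absurd h (cd.hμpos x hx).ne'
  · exact absurd h (cd.hμpos y hy).ne'
  · exact hne (sub_eq_zero.1 h)

lemma ChainData.hPBnorm {g : EuclHat n → EuclHat n} (cd : ChainData n g) :
    IsPB cd.E cd.μ (fun x => ‖cd.G x‖ ^ 2) :=
  (cd.hPB 0).congr (fun x _ => by rw [sub_zero])

lemma ChainData.hPBinner {g : EuclHat n → EuclHat n} (cd : ChainData n g) (b : Eucl n) :
    IsPB cd.E cd.μ (fun x => ⟪b, cd.G x⟫_ℝ) := by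
  have h := (cd.hPBnorm.lc cd.hPBone (1/2) (‖b‖^2/2)).lc (cd.hPB b) 1 (-(1/2))
  refine h.congr (fun x _ => ?_)
  have hx := norm_sub_sq_real (cd.G x) b
  have h2 : ⟪cd.G x, b⟫_ℝ = ⟪b, cd.G x⟫_ℝ := real_inner_comm _ _
  show ⟪b, cd.G x⟫_ℝ
    = 1 * (1/2 * ‖cd.G x‖ ^ 2 + ‖b‖^2/2 * 1) + (-(1/2)) * ‖cd.G x - b‖ ^ 2
  linarith [hx, h2]

def chainData_id : ChainData n id := by
  refine ⟨∅, id, fun _ => 1, finite_empty, fun x _ => rfl, fun x _ => one_pos,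
    fun x _ y _ => by simp only [id_eq, one_mul], ?_,
    ⟨0, 1, 0, fun x _ => by
      show (1:ℝ) = 1 * (0 * ‖x‖ ^ 2 + ⟪(0 : Eucl n), x⟫_ℝ + 1)
      rw [inner_zero_left]; ring⟩, continuousOn_id, continuousOn_const,
    fun e he => absurd he (notMem_empty e), fun e he => absurd he (notMem_empty e)⟩
  intro c
  refine ⟨1, ‖c‖^2, -(2:ℝ) • c, fun x _ => ?_⟩
  show ‖id x - c‖ ^ 2 = _
  rw [norm_sub_sq_real, real_inner_smul_left, real_inner_comm]
  simp only [id_eq]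
  ring

section SphereStep

variable {g : EuclHat n → EuclHat n} (cd : ChainData n g) (a : Eucl n) {r : ℝ}

lemma tendsto_spfin_of_norm_atTop {α : Type*} {l : Filter α} {G : α → Eucl n}
    (h : Tendsto (fun x => ‖G x‖) l atTop) (r : ℝ) :
    Tendsto (fun x => spfin a r (G x)) l (𝓝 a) := by
  have hd : ∀ x, dist (spfin a r (G x)) a = r ^ 2 / ‖G x - a‖ := by
    intro x
    rw [dist_eq_norm, norm_spfin_sub]
  rw [tendsto_iff_dist_tendsto_zero]
  have h2 : Tendsto (fun x => ‖G x - a‖) l atTop := by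
    apply tendsto_atTop_mono (fun x => ?_) (tendsto_atTop_add_const_right _ (-‖a‖) h)
    have := norm_sub_norm_le (G x) a
    linarith [this]
  have h3 : Tendsto (fun x => r ^ 2 / ‖G x - a‖) l (𝓝 0) := tendsto_const_nhds.div_atTop h2
  exact h3.congr (fun x => (hd x).symm)

lemma tendsto_norm_spfin_atTop {α : Type*} {l : Filter α} {G : α → Eucl n}
    (hr : 0 < r) (h : Tendsto G l (𝓝 a)) (h' : ∀ᶠ x in l, G x ≠ a) :
    Tendsto (fun x => ‖spfin a r (G x)‖) l atTop := by
  have h2 : Tendsto (fun x => ‖G x - a‖) l (𝓝[>] (0:ℝ)) := by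
    rw [tendsto_nhdsWithin_iff]
    constructor
    · have h0 : Tendsto (fun x => G x - a) l (𝓝 (a - a)) := h.sub tendsto_const_nhds
      rw [sub_self] at h0
      simpa using h0.norm
    · exact h'.mono (fun x hx => norm_pos_iff.2 (sub_ne_zero.2 hx))
  have h3 : Tendsto (fun x => ‖G x - a‖⁻¹) l atTop := tendsto_inv_nhdsGT_zero.comp h2
  have h4 : Tendsto (fun x => r ^ 2 * ‖G x - a‖⁻¹) l atTop :=
    h3.const_mul_atTop (by positivity)
  apply tendsto_atTop_mono (fun x => ?_) (tendsto_atTop_add_const_right _ (-‖a‖) h4)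
  have h5 : ‖spfin a r (G x)‖ ≥ ‖spfin a r (G x) - a‖ - ‖a‖ := by
    have := norm_sub_norm_le (spfin a r (G x) - a) (-a)
    simp only [sub_neg_eq_add, sub_add_cancel, norm_neg] at this
    linarith
  rw [norm_spfin_sub] at h5
  rw [div_eq_mul_inv] at h5
  linarith

def chainData_sphere (hr : 0 < r) : ChainData n (sphereRefl n a r ∘ g) := by
  classical
  set E' : Set (Eucl n) := cd.E ∪ {x | x ∉ cd.E ∧ cd.G x = a} with hE'def
  have hmem : ∀ x, x ∉ E' → x ∉ cd.E ∧ cd.G x ≠ a := by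
    intro x hx
    have h1 : x ∉ cd.E := fun h => hx (Or.inl h)
    exact ⟨h1, fun h => hx (Or.inr ⟨h1, h⟩)⟩
  have hEE' : cd.E ⊆ E' := subset_union_left
  have hE'c : E'ᶜ ⊆ cd.Eᶜ := compl_subset_compl.2 hEE'
  have hE'fin : E'.Finite := by
    apply cd.hEfin.union
    apply Set.Subsingleton.finite
    intro x hx y hy
    exact cd.hGinj x hx.1 y hy.1 (by rw [hx.2, hy.2])
  refine ⟨E', fun x => spfin a r (cd.G x), fun x => cd.μ x * (r ^ 2 / ‖cd.G x - a‖ ^ 2),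
    hE'fin, ?_, ?_, ?_, ?_, ?_, ?_, ?_, ?_, ?_⟩
  · intro x hx
    obtain ⟨hxE, hGa⟩ := hmem x hx
    show sphereRefl n a r (g ↑x) = _
    rw [cd.hfin x hxE, sphereRefl_coe_ne r hGa]
  · intro x hx
    obtain ⟨hxE, hGa⟩ := hmem x hx
    exact mul_pos (cd.hμpos x hxE) (div_pos (by positivity) (norm_sq_pos_of_ne hGa))
  · intro x hx y hy
    obtain ⟨hxE, hGax⟩ := hmem x hx
    obtain ⟨hyE, hGay⟩ := hmem y hy
    show ‖spfin a r (cd.G x) - spfin a r (cd.G y)‖ ^ 2 = _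
    rw [sphere_dist hr hGax hGay, cd.hI1 x hxE y hyE]
    ring
  · -- hPB
    intro c
    have hH : IsPB cd.E cd.μ (fun x => (‖a - c‖ ^ 2 / r ^ 2) * ‖cd.G x - a‖ ^ 2
        + 1 * (2 * ⟪a - c, cd.G x⟫_ℝ + (r ^ 2 - 2 * ⟪a - c, a⟫_ℝ) * 1)) :=
      (cd.hPB a).lc ((cd.hPBinner (a - c)).lc cd.hPBone 2 (r ^ 2 - 2 * ⟪a - c, a⟫_ℝ))
        (‖a - c‖ ^ 2 / r ^ 2) 1
    apply IsPB.scale hEE' hH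
    intro x hx
    obtain ⟨hxE, hGa⟩ := hmem x hx
    show ‖spfin a r (cd.G x) - c‖ ^ 2 = _
    rw [spfin_dist_pb c hr hGa]
    rw [inner_sub_right]
    ring
  · -- hPBone
    have hH : IsPB cd.E cd.μ (fun x => (1 / r ^ 2) * ‖cd.G x - a‖ ^ 2 + 0 * 1) :=
      (cd.hPB a).lc cd.hPBone (1 / r ^ 2) 0
    apply IsPB.scale hEE' hH
    intro x hx
    obtain ⟨hxE, hGa⟩ := hmem x hx
    have h2 : ‖cd.G x - a‖ ^ 2 ≠ 0 := (norm_sq_pos_of_ne hGa).ne'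
    have hr2 : r ^ 2 ≠ 0 := by positivity
    field_simp
    rw [mul_zero, add_zero, div_self h2]
  · -- hGcont
    intro x hx
    have hGa := (hmem x hx).2
    exact (continuousAt_spfin r hGa).comp_continuousWithinAt
      ((cd.hGcont x (hE'c hx)).mono hE'c)
  · -- hμcont
    apply ContinuousOn.mul (cd.hμcont.mono hE'c)
    apply ContinuousOn.div continuousOn_const
    · exact ((cd.hGcont.mono hE'c).sub continuousOn_const).norm.pow 2
    · intro x hx
      exact (norm_sq_pos_of_ne (hmem x hx).2).ne'
  · -- htends
    intro e he w hw
    have hmono : 𝓝[E'ᶜ] e ≤ 𝓝[cd.Eᶜ] e := nhdsWithin_mono e hE'c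
    by_cases heE : e ∈ cd.E
    · cases hge : g ↑e with
      | none =>
        rw [Function.comp_apply, hge] at hw
        have hwa : w = a :=
          (OnePoint.coe_eq_coe.1 (show (↑a : EuclHat n) = ↑w from hw)).symm
        rw [hwa]
        exact tendsto_spfin_of_norm_atTop a ((cd.hinfty e heE hge).mono_left hmono) r
      | some u =>
        rw [Function.comp_apply, hge] at hw
        have hw2 : sphereRefl n a r ↑u = ↑w := hw
        rcases eq_or_ne u a with hu | hu
        · rw [hu, sphereRefl_coe_self] at hw2
          exact absurd hw2.symm (OnePoint.coe_ne_infty w)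
        · rw [sphereRefl_coe_ne r hu] at hw2
          have hwu : w = spfin a r u := (OnePoint.coe_eq_coe.1 hw2).symm
          rw [hwu]
          exact (continuousAt_spfin r hu).tendsto.comp
            ((cd.htends e heE u hge).mono_left hmono)
    · have he2 : e ∈ {x | x ∉ cd.E ∧ cd.G x = a} := by
        rcases he with h | h
        · exact absurd h heE
        · exact h
      rw [Function.comp_apply, cd.hfin e heE, he2.2, sphereRefl_coe_self] at hw
      exact absurd hw.symm (OnePoint.coe_ne_infty w)
  · -- hinfty
    intro e he hw
    have hmono : 𝓝[E'ᶜ] e ≤ 𝓝[cd.Eᶜ] e := nhdsWithin_mono e hE'c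
    have hne : ∀ᶠ x in 𝓝[E'ᶜ] e, cd.G x ≠ a := by
      apply eventually_mem_nhdsWithin.mono
      intro x hx
      exact (hmem x hx).2
    by_cases heE : e ∈ cd.E
    · cases hge : g ↑e with
      | none =>
        rw [Function.comp_apply, hge] at hw
        exact absurd (show (↑a : EuclHat n) = OnePoint.infty from hw) (OnePoint.coe_ne_infty a)
      | some u =>
        rw [Function.comp_apply, hge] at hw
        have hw2 : sphereRefl n a r ↑u = OnePoint.infty := hw
        rcases eq_or_ne u a with hu | hu
        · rw [hu] at hge
          exact tendsto_norm_spfin_atTop a hr ((cd.htends e heE a hge).mono_left hmono) hne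
        · rw [sphereRefl_coe_ne r hu] at hw2
          exact absurd hw2 (OnePoint.coe_ne_infty _)
    · have he2 : e ∈ {x | x ∉ cd.E ∧ cd.G x = a} := by
        rcases he with h | h
        · exact absurd h heE
        · exact h
      have hGe : Tendsto cd.G (𝓝[E'ᶜ] e) (𝓝 a) := by
        have h5 := (cd.hGcont e heE).mono hE'c
        rw [ContinuousWithinAt, he2.2] at h5
        exact h5
      exact tendsto_norm_spfin_atTop a hr hGe hne

end SphereStep

section HyperStep

variable {g : EuclHat n → EuclHat n} (cd : ChainData n g) (a : Eucl n) {t : ℝ}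

def chainData_hyper (ha : ‖a‖ = 1) (t : ℝ) : ChainData n (hyperRefl n a t ∘ g) := by
  refine ⟨cd.E, fun x => hyfin a t (cd.G x), cd.μ, cd.hEfin, ?_, cd.hμpos, ?_, ?_, cd.hPBone,
    ?_, cd.hμcont, ?_, ?_⟩
  · intro x hx
    show hyperRefl n a t (g ↑x) = _
    rw [cd.hfin x hx, hyperRefl_coe]
  · intro x hx y hy
    show ‖hyfin a t (cd.G x) - hyfin a t (cd.G y)‖ ^ 2 = _
    rw [hyfin_isometry ha]
    exact cd.hI1 x hx y hy
  · intro c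
    apply (cd.hPB (hyfin a t c)).congr
    intro x hx
    show ‖hyfin a t (cd.G x) - c‖ ^ 2 = _
    rw [show (c : Eucl n) = hyfin a t (hyfin a t c) from (hyfin_invol ha t c).symm,
      hyfin_isometry ha, hyfin_invol ha]
  · exact (continuous_hyfin a t).comp_continuousOn cd.hGcont
  · intro e he w hw
    cases hge : g ↑e with
    | none =>
      rw [Function.comp_apply, hge] at hw
      exact absurd hw.symm (OnePoint.coe_ne_infty w)
    | some u =>
      rw [Function.comp_apply, hge] at hw
      have hw2 : (↑(hyfin a t u) : EuclHat n) = ↑w := hw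
      have hwu : w = hyfin a t u := (OnePoint.coe_eq_coe.1 hw2).symm
      rw [hwu]
      exact ((continuous_hyfin a t).continuousAt).tendsto.comp (cd.htends e he u hge)
  · intro e he hw
    cases hge : g ↑e with
    | none =>
      have h1 := cd.hinfty e he hge
      apply tendsto_atTop_mono (fun x => ?_)
        (tendsto_atTop_add_const_right _ (-‖hyfin a t 0‖) h1)
      have h2 : ‖hyfin a t (cd.G x) - hyfin a t 0‖ = ‖cd.G x - 0‖ := hyfin_isometry ha t _ _
      rw [sub_zero] at h2
      have h3 := norm_sub_le (hyfin a t (cd.G x)) (hyfin a t 0)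
      rw [h2] at h3
      linarith
    | some u =>
      rw [Function.comp_apply, hge] at hw
      exact absurd (show (↑(hyfin a t u) : EuclHat n) = OnePoint.infty from hw)
        (OnePoint.coe_ne_infty _)

end HyperStep

lemma chainData_of_list (L : List (EuclHat n → EuclHat n)) (hL : ∀ f ∈ L, IsReflection n f) :
    Nonempty (ChainData n (L.foldr (· ∘ ·) id)) := by
  induction L with
  | nil => exact ⟨chainData_id⟩
  | cons f T ih =>
    obtain ⟨hT⟩ := ih (fun f hf => hL f (List.mem_cons_of_mem _ hf))
    rcases hL f (List.mem_cons_self) with ⟨a, r, hr, rfl⟩ | ⟨a, t, ha, rfl⟩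
    · exact ⟨chainData_sphere hT a hr⟩
    · exact ⟨chainData_hyper hT a ha t⟩

end AuxB


noncomputable section AuxC

open OnePoint

variable {n : ℕ}

lemma inner_single_single_real (i j : Fin n) :
    ⟪(EuclideanSpace.single i (1:ℝ) : Eucl n), EuclideanSpace.single j (1:ℝ)⟫_ℝ
      = if i = j then 1 else 0 := by
  rw [EuclideanSpace.inner_single_left]
  simp [EuclideanSpace.single_apply]

lemma inner_single_right_real (v : Eucl n) (i : Fin n) :
    ⟪v, (EuclideanSpace.single i (1:ℝ) : Eucl n)⟫_ℝ = v i := by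
  rw [EuclideanSpace.inner_single_right]
  simp

/-- the circle through the `i`-th and `j`-th coordinate axes -/
def circ (i j : Fin n) (θ : ℝ) : Eucl n :=
  Real.cos θ • (EuclideanSpace.single i (1:ℝ)) + Real.sin θ • (EuclideanSpace.single j (1:ℝ))

lemma circ_norm {i j : Fin n} (hij : i ≠ j) (θ : ℝ) : ‖circ i j θ‖ = 1 := by
  apply norm_eq_of_sq_eq (norm_nonneg _) zero_le_one
  rw [one_pow, circ, norm_add_sq_real, real_inner_smul_left, real_inner_smul_right,
    norm_smul, norm_smul, inner_single_single_real, if_neg hij, mul_pow, mul_pow,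
    EuclideanSpace.norm_single, EuclideanSpace.norm_single]
  simp only [Real.norm_eq_abs, sq_abs, norm_one]
  nlinarith [Real.sin_sq_add_cos_sq θ]

lemma circ_inner {i j : Fin n} (β : Eucl n) (θ : ℝ) :
    ⟪β, circ i j θ⟫_ℝ = Real.cos θ * β i + Real.sin θ * β j := by
  rw [circ, inner_add_right, real_inner_smul_right, real_inner_smul_right,
    inner_single_right_real, inner_single_right_real]

lemma circ_coord {i j : Fin n} (hij : i ≠ j) (θ : ℝ) :
    ⟪(EuclideanSpace.single i (1:ℝ) : Eucl n), circ i j θ⟫_ℝ = Real.cos θ := by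
  rw [circ, inner_add_right, real_inner_smul_right, real_inner_smul_right,
    inner_single_single_real, inner_single_single_real, if_pos rfl, if_neg hij]
  ring

lemma circ_injOn {i j : Fin n} (hij : i ≠ j) :
    InjOn (circ i j) (Ioo 0 (Real.pi/2)) := by
  intro θ1 h1 θ2 h2 heq
  have hc : Real.cos θ1 = Real.cos θ2 := by
    rw [← circ_coord hij θ1, ← circ_coord hij θ2, heq]
  have hpi := Real.pi_pos
  exact Real.injOn_cos ⟨h1.1.le, by linarith [h1.2]⟩ ⟨h2.1.le, by linarith [h2.2]⟩ hc

lemma exists_good_pair {i j : Fin n} (hij : i ≠ j) {E : Set (Eucl n)} (hE : E.Finite) :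
    ∃ θ1 ∈ Ioo 0 (Real.pi/2), ∃ θ2 ∈ Ioo 0 (Real.pi/2), θ1 ≠ θ2 ∧
      (circ i j θ1 ∉ E ∧ -(circ i j θ1) ∉ E) ∧ (circ i j θ2 ∉ E ∧ -(circ i j θ2) ∉ E) := by
  set bigE := E ∪ (fun v : Eucl n => -v) '' E with hbigE
  have hbigEfin : bigE.Finite := hE.union (hE.image _)
  set bad := Ioo 0 (Real.pi/2) ∩ (circ i j) ⁻¹' bigE with hbad
  have hbadfin : bad.Finite := by
    apply Set.Finite.of_finite_image (f := circ i j)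
    · exact hbigEfin.subset (by rintro _ ⟨θ, hθ, rfl⟩; exact hθ.2)
    · exact (circ_injOn hij).mono inter_subset_left
  have hpi := Real.pi_pos
  have hgood : (Ioo 0 (Real.pi/2) \ bad).Infinite :=
    (Set.Ioo_infinite (by linarith)).diff hbadfin
  obtain ⟨θ1, h1, θ2, h2, hne⟩ := hgood.nontrivial
  have hprop : ∀ θ, θ ∈ Ioo 0 (Real.pi/2) \ bad → circ i j θ ∉ E ∧ -(circ i j θ) ∉ E := by
    intro θ hθ
    have hnb : circ i j θ ∉ bigE := fun h => hθ.2 ⟨hθ.1, h⟩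
    constructor
    · exact fun h => hnb (Or.inl h)
    · intro h
      exact hnb (Or.inr ⟨-(circ i j θ), h, by simp⟩)
  exact ⟨θ1, h1.1, θ2, h2.1, hne, hprop θ1 h1, hprop θ2 h2⟩

lemma quad_vanish (hn : 2 ≤ n) {E : Set (Eucl n)} (hE : E.Finite) {α γ : ℝ} {β : Eucl n}
    (h : ∀ x : Eucl n, ‖x‖ = 1 → x ∉ E → α * ‖x‖ ^ 2 + ⟪β, x⟫_ℝ + γ = 0) :
    β = 0 ∧ α + γ = 0 := by
  have pair : ∀ i j : Fin n, i ≠ j → β i = 0 ∧ α + γ = 0 := by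
    intro i j hij
    obtain ⟨θ1, hθ1, θ2, hθ2, hne, ⟨hE1, hE1'⟩, ⟨hE2, hE2'⟩⟩ := exists_good_pair hij hE
    have heq : ∀ θ, θ ∈ Ioo 0 (Real.pi/2) → circ i j θ ∉ E → -(circ i j θ) ∉ E →
        (Real.cos θ * β i + Real.sin θ * β j = 0 ∧ α + γ = 0) := by
      intro θ hθ hc hc'
      have hA := h (circ i j θ) (circ_norm hij θ) hc
      have hB := h (-(circ i j θ)) (by rw [norm_neg]; exact circ_norm hij θ) hc'
      rw [circ_norm hij θ, circ_inner] at hA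
      rw [inner_neg_right, norm_neg, circ_norm hij θ, circ_inner] at hB
      constructor
      · linarith
      · linarith
    obtain ⟨e1, hαγ⟩ := heq θ1 hθ1 hE1 hE1'
    obtain ⟨e2, -⟩ := heq θ2 hθ2 hE2 hE2'
    rcases hne.lt_or_gt with hlt | hlt
    · have hdet : Real.sin θ2 * Real.cos θ1 - Real.cos θ2 * Real.sin θ1 ≠ 0 := by
        rw [← Real.sin_sub]
        exact (Real.sin_pos_of_pos_of_lt_pi (by linarith)
          (by linarith [hθ1.1, hθ2.2, Real.pi_pos])).ne'
      have hz : (Real.sin θ2 * Real.cos θ1 - Real.cos θ2 * Real.sin θ1) * β i = 0 := by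
        linear_combination Real.sin θ2 * e1 - Real.sin θ1 * e2
      exact ⟨(mul_eq_zero.1 hz).resolve_left hdet, hαγ⟩
    · have hdet : Real.sin θ1 * Real.cos θ2 - Real.cos θ1 * Real.sin θ2 ≠ 0 := by
        rw [← Real.sin_sub]
        exact (Real.sin_pos_of_pos_of_lt_pi (by linarith)
          (by linarith [hθ2.1, hθ1.2, Real.pi_pos])).ne'
      have hz : (Real.sin θ1 * Real.cos θ2 - Real.cos θ1 * Real.sin θ2) * β i = 0 := by
        linear_combination Real.sin θ1 * e2 - Real.sin θ2 * e1
      exact ⟨(mul_eq_zero.1 hz).resolve_left hdet, hαγ⟩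
  haveI : Nontrivial (Fin n) := Fin.nontrivial_iff_two_le.2 hn
  have hcoord : ∀ i : Fin n, β i = 0 := by
    intro i
    obtain ⟨j, hj⟩ := exists_ne i
    exact (pair i j (Ne.symm hj)).1
  constructor
  · have hself : ⟪β, β⟫_ℝ = 0 := by
      rw [PiLp.inner_apply]
      apply Finset.sum_eq_zero
      intro i _
      simp [hcoord i]
    exact inner_self_eq_zero.1 hself
  · obtain ⟨j, hj⟩ := exists_ne (⟨0, by omega⟩ : Fin n)
    exact (pair _ j (Ne.symm hj)).2

lemma exists_sphere_not_mem (hn : 2 ≤ n) {E : Set (Eucl n)} (hE : E.Finite) :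
    ∃ ζ : Eucl n, ‖ζ‖ = 1 ∧ ζ ∉ E := by
  have hij : (⟨0, by omega⟩ : Fin n) ≠ ⟨1, by omega⟩ := by
    intro h
    simpa using congrArg Fin.val h
  obtain ⟨θ1, hθ1, -, -, -, ⟨hE1, -⟩, -⟩ := exists_good_pair hij hE
  exact ⟨_, circ_norm hij θ1, hE1⟩

/-! topology helpers -/

lemma preimage_smul_finite {T : Set (Eucl n)} (hT : T.Finite) {v : Eucl n} (hv : v ≠ 0) :
    {c : ℝ | c • v ∈ T}.Finite :=
  hT.preimage ((smul_left_injective ℝ hv).injOn)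

lemma mem_closure_ball_diff (hn : 0 < n) {T : Set (Eucl n)} (hT : T.Finite)
    {x : Eucl n} (hx : ‖x‖ ≤ 1) : x ∈ closure (ball (0:Eucl n) 1 \ T) := by
  rw [_root_.mem_closure_iff]
  intro o ho hxo
  obtain ⟨ε, hε, hball⟩ := Metric.isOpen_iff.1 ho x hxo
  rcases eq_or_ne x 0 with rfl | hx0
  · set v : Eucl n := EuclideanSpace.single ⟨0, hn⟩ (1:ℝ) with hv
    have hvn : ‖v‖ = 1 := by rw [hv, EuclideanSpace.norm_single, norm_one]
    have hv0 : v ≠ 0 := by intro h; rw [h, norm_zero] at hvn; norm_num at hvn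
    have hδ : (0:ℝ) < min ε 1 := lt_min hε one_pos
    obtain ⟨c, hc⟩ := ((Set.Ioo_infinite hδ).diff (preimage_smul_finite hT hv0)).nonempty
    obtain ⟨⟨hc0, hc1⟩, hcT⟩ := hc
    refine ⟨c • v, hball ?_, ?_, hcT⟩
    · rw [mem_ball, dist_eq_norm, sub_zero, norm_smul, hvn, mul_one, Real.norm_eq_abs,
        abs_of_pos hc0]
      exact hc1.trans_le (min_le_left _ _)
    · rw [mem_ball_zero_iff, norm_smul, hvn, mul_one, Real.norm_eq_abs, abs_of_pos hc0]
      exact hc1.trans_le (min_le_right _ _)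
  · have hxn : 0 < ‖x‖ := norm_pos_iff.2 hx0
    set lo := max (1 - ε / ‖x‖) 0 with hlo
    have hlo1 : lo < 1 := by
      apply max_lt _ one_pos
      have : 0 < ε / ‖x‖ := by positivity
      linarith
    obtain ⟨c, hc⟩ := ((Set.Ioo_infinite hlo1).diff (preimage_smul_finite hT hx0)).nonempty
    obtain ⟨⟨hc0, hc1⟩, hcT⟩ := hc
    have hcpos : 0 ≤ c := le_trans (le_max_right _ _) hc0.le
    refine ⟨c • x, hball ?_, ?_, hcT⟩
    · rw [mem_ball, dist_eq_norm]
      have h1 : c • x - x = (c - 1) • x := by rw [sub_smul, one_smul]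
      rw [h1, norm_smul, Real.norm_eq_abs, abs_of_nonpos (by linarith [hc1] : c - 1 ≤ 0)]
      have h2 : 1 - ε / ‖x‖ ≤ lo := le_max_left _ _
      have h3 : 1 - c < ε / ‖x‖ := by linarith [hc0]
      calc -(c - 1) * ‖x‖ = (1 - c) * ‖x‖ := by ring
        _ < (ε / ‖x‖) * ‖x‖ := mul_lt_mul_of_pos_right h3 hxn
        _ = ε := by field_simp
    · rw [mem_ball_zero_iff, norm_smul, Real.norm_eq_abs, abs_of_nonneg hcpos]
      calc c * ‖x‖ ≤ c * 1 := mul_le_mul_of_nonneg_left hx hcpos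
        _ = c := mul_one c
        _ < 1 := hc1

lemma one_mem_closure_Ioo_diff {T : Set ℝ} (hT : T.Finite) :
    (1:ℝ) ∈ closure (Ioo (0:ℝ) 1 \ T) := by
  rw [_root_.mem_closure_iff]
  intro o ho hxo
  obtain ⟨ε, hε, hball⟩ := Metric.isOpen_iff.1 ho 1 hxo
  have hlt : max (1 - ε) 0 < 1 := max_lt (by linarith) one_pos
  obtain ⟨c, ⟨⟨hc0, hc1⟩, hcT⟩⟩ := ((Set.Ioo_infinite hlt).diff hT).nonempty
  have hcI : c ∈ Ioo (0:ℝ) 1 := ⟨lt_of_le_of_lt (le_max_right _ _) hc0, hc1⟩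
  refine ⟨c, hball ?_, hcI, hcT⟩
  rw [mem_ball, Real.dist_eq, abs_of_nonpos (by linarith)]
  have := le_max_left (1 - ε) 0
  linarith

lemma ball_diff_finite_nontrivial (hn : 0 < n) {T : Set (Eucl n)} (hT : T.Finite) :
    ∃ x ∈ ball (0:Eucl n) 1 \ T, ∃ y ∈ ball (0:Eucl n) 1 \ T, x ≠ y := by
  set v : Eucl n := EuclideanSpace.single ⟨0, hn⟩ (1:ℝ) with hv
  have hvn : ‖v‖ = 1 := by rw [hv, EuclideanSpace.norm_single, norm_one]
  have hv0 : v ≠ 0 := by intro h; rw [h, norm_zero] at hvn; norm_num at hvn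
  have h1 : ((fun c : ℝ => c • v) '' (Ioo 0 1)).Infinite :=
    Set.Infinite.image ((smul_left_injective ℝ hv0).injOn) (Set.Ioo_infinite one_pos)
  have h2 : ((fun c : ℝ => c • v) '' (Ioo 0 1)) ⊆ ball (0:Eucl n) 1 := by
    rintro _ ⟨c, ⟨hc0, hc1⟩, rfl⟩
    rw [mem_ball_zero_iff, norm_smul, hvn, mul_one, Real.norm_eq_abs, abs_of_pos hc0]
    exact hc1
  have h3 : (ball (0:Eucl n) 1 \ T).Infinite :=
    ((h1.diff hT).mono (diff_subset_diff_left h2))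
  obtain ⟨x, hx, y, hy, hxy⟩ := h3.nontrivial
  exact ⟨x, hx, y, hy, hxy⟩

lemma chain_gamma (hn : 2 ≤ n) {g : EuclHat n → EuclHat n} (cd : ChainData n g)
    (mapsB : ∀ x, x ∈ ball (0:Eucl n) 1 → x ∉ cd.E → cd.G x ∈ ball (0:Eucl n) 1)
    (hsurjB : ∀ w ∈ ball (0:Eucl n) 1, ∃ x ∈ ball (0:Eucl n) 1, g ↑x = ↑w)
    (hginj : Function.Injective g) :
    ∃ γ : ℝ, 0 < γ ∧ γ ≤ 1 ∧
      ∀ x, x ∉ cd.E → 1 - ‖cd.G x‖ ^ 2 = cd.μ x * (γ * (1 - ‖x‖ ^ 2)) := by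
  have hn0 : 0 < n := by omega
  have hsph : ∀ ζ, ‖ζ‖ = 1 → ζ ∉ cd.E → ‖cd.G ζ‖ = 1 := by
    intro ζ hζ hζE
    have hle : ‖cd.G ζ‖ ≤ 1 := by
      have hcl : ζ ∈ closure (ball (0:Eucl n) 1 \ cd.E) :=
        mem_closure_ball_diff hn0 cd.hEfin hζ.le
      haveI hnb : (𝓝[ball (0:Eucl n) 1 \ cd.E] ζ).NeBot :=
        mem_closure_iff_nhdsWithin_neBot.1 hcl
      have htd : Tendsto cd.G (𝓝[ball (0:Eucl n) 1 \ cd.E] ζ) (𝓝 (cd.G ζ)) :=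
        (cd.hGcont ζ hζE).mono_left (nhdsWithin_mono _ (fun y hy => hy.2))
      have hev : ∀ᶠ y in 𝓝[ball (0:Eucl n) 1 \ cd.E] ζ, ‖cd.G y‖ ≤ 1 :=
        eventually_mem_nhdsWithin.mono
          (fun y hy => (mem_ball_zero_iff.1 (mapsB y hy.1 hy.2)).le)
      exact le_of_tendsto htd.norm hev
    have hgeq : ¬ ‖cd.G ζ‖ < 1 := by
      intro hlt
      obtain ⟨x, hxB, hgx⟩ := hsurjB (cd.G ζ) (mem_ball_zero_iff.2 hlt)
      have hxζ : x = ζ := OnePoint.coe_eq_coe.1 (hginj (by rw [hgx, cd.hfin ζ hζE]))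
      rw [hxζ, mem_ball_zero_iff, hζ] at hxB
      exact lt_irrefl 1 hxB
    exact le_antisymm hle (not_lt.1 hgeq)
  obtain ⟨αq, γq, βq, hq⟩ := cd.hPBone.lc cd.hPBnorm 1 (-1)
  have hvan : ∀ x : Eucl n, ‖x‖ = 1 → x ∉ cd.E →
      αq * ‖x‖ ^ 2 + ⟪βq, x⟫_ℝ + γq = 0 := by
    intro x hx hxE
    have h1 : 1 * 1 + -1 * ‖cd.G x‖ ^ 2 = cd.μ x * (αq * ‖x‖ ^ 2 + ⟪βq, x⟫_ℝ + γq) := hq x hxE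
    rw [hsph x hx hxE] at h1
    have h2 : cd.μ x * (αq * ‖x‖ ^ 2 + ⟪βq, x⟫_ℝ + γq) = 0 := by linarith
    exact (mul_eq_zero.1 h2).resolve_left (cd.hμpos x hxE).ne'
  obtain ⟨hβ0, hαγ⟩ := quad_vanish hn cd.hEfin hvan
  have hid : ∀ x, x ∉ cd.E → 1 - ‖cd.G x‖ ^ 2 = cd.μ x * (γq * (1 - ‖x‖ ^ 2)) := by
    intro x hxE
    have h1 : 1 * 1 + -1 * ‖cd.G x‖ ^ 2 = cd.μ x * (αq * ‖x‖ ^ 2 + ⟪βq, x⟫_ℝ + γq) := hq x hxE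
    rw [hβ0, inner_zero_left] at h1
    have hα : αq = -γq := by linarith
    rw [hα] at h1
    have h2 : cd.μ x * (-γq * ‖x‖ ^ 2 + 0 + γq) = cd.μ x * (γq * (1 - ‖x‖ ^ 2)) := by ring
    linarith
  have hγpos : 0 < γq := by
    obtain ⟨x0, hx0, -, -, -⟩ := ball_diff_finite_nontrivial hn0 cd.hEfin
    obtain ⟨hx0B, hx0E⟩ := hx0
    have h1 := hid x0 hx0E
    have h2 : ‖cd.G x0‖ < 1 := mem_ball_zero_iff.1 (mapsB x0 hx0B hx0E)
    have h3 : ‖x0‖ < 1 := mem_ball_zero_iff.1 hx0B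
    by_contra hγ
    push_neg at hγ
    have h4 : cd.μ x0 * (γq * (1 - ‖x0‖ ^ 2)) ≤ 0 := by
      apply mul_nonpos_of_nonneg_of_nonpos (cd.hμpos x0 hx0E).le
      apply mul_nonpos_of_nonpos_of_nonneg hγ
      nlinarith [norm_nonneg x0]
    nlinarith [norm_nonneg (cd.G x0)]
  have hγle : γq ≤ 1 := by
    obtain ⟨ζ0, hζ0, hζ0E⟩ := exists_sphere_not_mem hn cd.hEfin
    have hζ0ne : ζ0 ≠ 0 := by
      intro h; rw [h, norm_zero] at hζ0; norm_num at hζ0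
    have hT'fin : {c : ℝ | c • ζ0 ∈ cd.E}.Finite := preimage_smul_finite cd.hEfin hζ0ne
    set F := 𝓝[Ioo (0:ℝ) 1 \ {c : ℝ | c • ζ0 ∈ cd.E}] (1:ℝ) with hF
    haveI : F.NeBot := mem_closure_iff_nhdsWithin_neBot.1 (one_mem_closure_Ioo_diff hT'fin)
    have hmap : Tendsto (fun r : ℝ => r • ζ0) F (𝓝[cd.Eᶜ] ζ0) := by
      rw [tendsto_nhdsWithin_iff]
      constructor
      · have h1 : Tendsto (fun r : ℝ => r • ζ0) (𝓝 (1:ℝ)) (𝓝 ((1:ℝ) • ζ0)) :=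
          ((continuous_id.smul continuous_const).tendsto 1)
        rw [one_smul] at h1
        exact h1.mono_left nhdsWithin_le_nhds
      · exact eventually_mem_nhdsWithin.mono (fun r hr => hr.2)
    have hμt : Tendsto (fun r : ℝ => cd.μ (r • ζ0)) F (𝓝 (cd.μ ζ0)) :=
      Filter.Tendsto.comp (cd.hμcont ζ0 hζ0E) hmap
    have hknow : ∀ᶠ r in F, γq ^ 2 * cd.μ (r • ζ0) * (1 + r) ^ 2 / 4 ≤ cd.μ ζ0 := by
      apply eventually_mem_nhdsWithin.mono
      rintro r ⟨⟨hr0, hr1⟩, hrT⟩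
      have hyE : r • ζ0 ∉ cd.E := hrT
      have hynorm : ‖r • ζ0‖ = r := by
        rw [norm_smul, Real.norm_eq_abs, abs_of_pos hr0, hζ0, mul_one]
      have hyB : r • ζ0 ∈ ball (0:Eucl n) 1 := mem_ball_zero_iff.2 (by rw [hynorm]; exact hr1)
      have hGy1 : ‖cd.G (r • ζ0)‖ < 1 := mem_ball_zero_iff.1 (mapsB _ hyB hyE)
      have hGζ : ‖cd.G ζ0‖ = 1 := hsph ζ0 hζ0 hζ0E
      have hd : ‖cd.G (r • ζ0) - cd.G ζ0‖ ^ 2 = cd.μ (r • ζ0) * cd.μ ζ0 * ‖r • ζ0 - ζ0‖ ^ 2 :=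
        cd.hI1 _ hyE ζ0 hζ0E
      have hyζ : ‖r • ζ0 - ζ0‖ = 1 - r := by
        rw [show r • ζ0 - ζ0 = (r - 1) • ζ0 from by rw [sub_smul, one_smul], norm_smul,
          Real.norm_eq_abs, abs_of_neg (by linarith), hζ0, mul_one]
        ring
      have h1 : 1 - ‖cd.G (r • ζ0)‖ ≤ ‖cd.G (r • ζ0) - cd.G ζ0‖ := by
        have h2 := norm_sub_norm_le (cd.G ζ0) (cd.G (r • ζ0))
        rw [hGζ, norm_sub_rev] at h2
        linarith
      have h3 : 1 - ‖cd.G (r • ζ0)‖ ^ 2 = cd.μ (r • ζ0) * (γq * (1 - r ^ 2)) := by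
        have h3' := hid _ hyE
        rw [hynorm] at h3'
        exact h3'
      have h4 : (1 - ‖cd.G (r • ζ0)‖) ^ 2 ≤ cd.μ (r • ζ0) * cd.μ ζ0 * (1 - r) ^ 2 := by
        rw [← hyζ, ← hd]
        exact pow_le_pow_left₀ (by linarith) h1 2
      have h5 : 1 - ‖cd.G (r • ζ0)‖ ^ 2 ≤ 2 * (1 - ‖cd.G (r • ζ0)‖) := by
        nlinarith [norm_nonneg (cd.G (r • ζ0))]
      have hμy := cd.hμpos _ hyE
      have hμζ := cd.hμpos ζ0 hζ0E
      have e1 : cd.μ (r • ζ0) * (γq * (1 - r ^ 2)) ≤ 2 * (1 - ‖cd.G (r • ζ0)‖) := by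
        linarith
      have e1nn : 0 ≤ cd.μ (r • ζ0) * (γq * (1 - r ^ 2)) := by
        apply mul_nonneg hμy.le
        apply mul_nonneg hγpos.le
        nlinarith
      have e2 : (cd.μ (r • ζ0) * (γq * (1 - r ^ 2))) ^ 2 ≤ (2 * (1 - ‖cd.G (r • ζ0)‖)) ^ 2 :=
        pow_le_pow_left₀ e1nn e1 2
      have efin : γq ^ 2 * cd.μ (r • ζ0) * (1 + r) ^ 2 * (cd.μ (r • ζ0) * (1 - r) ^ 2)
          ≤ 4 * cd.μ ζ0 * (cd.μ (r • ζ0) * (1 - r) ^ 2) := by nlinarith [e2, h4]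
      have hpos : 0 < cd.μ (r • ζ0) * (1 - r) ^ 2 := by
        have h6 : (0:ℝ) < 1 - r := by linarith
        positivity
      have h7 := le_of_mul_le_mul_right efin hpos
      linarith
    have hlim : Tendsto (fun r : ℝ => γq ^ 2 * cd.μ (r • ζ0) * (1 + r) ^ 2 / 4) F
        (𝓝 (γq ^ 2 * cd.μ ζ0 * (1 + 1) ^ 2 / 4)) := by
      apply Tendsto.div_const
      apply Tendsto.mul (tendsto_const_nhds.mul hμt)
      have h1 : Tendsto (fun r : ℝ => (1 + r) ^ 2) (𝓝 (1:ℝ)) (𝓝 (((1:ℝ) + 1) ^ 2)) :=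
        ((continuous_const.add continuous_id).pow 2).tendsto 1
      exact h1.mono_left nhdsWithin_le_nhds
    have hfin := le_of_tendsto hlim hknow
    have hμζ := cd.hμpos ζ0 hζ0E
    by_contra hgt
    push_neg at hgt
    have h8 : (1:ℝ) < γq ^ 2 := by nlinarith
    have h9 : cd.μ ζ0 < γq ^ 2 * cd.μ ζ0 := by nlinarith
    nlinarith [hfin]
  exact ⟨γq, hγpos, hγle, hid⟩

end AuxC


set_option maxHeartbeats 2000000

/-- If `φ ∈ Möb(B)`, `ζ ∈ S` and `δ > 1`, then
`φ(Γ_δ(ζ)) ⊆ Γ_{δ̃}(φ(ζ))` with `δ̃ = δ(1+|φ(0)|)/(1−|φ(0)|)`. -/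
theorem mobius_image_ntRegion_subset (n : ℕ) (hn : 2 ≤ n)
    (φ : Eucl n → Eucl n) (hφ : IsMobiusBall n φ)
    (ζ : Eucl n) (hζ : ζ ∈ uSphere n) (δ : ℝ) (hδ : 1 < δ) :
    φ '' ntRegion n δ ζ ⊆
      ntRegion n (δ * (1 + ‖φ 0‖) / (1 - ‖φ 0‖)) (φ ζ) := by
  classical
  have hn0 : 0 < n := by omega
  obtain ⟨⟨U, hUopen, hUball, g, hgMob, hgU⟩, hBij⟩ := hφ
  obtain ⟨L, hLne, hLrefl, rfl⟩ := hgMob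
  have hBij' : Set.BijOn φ (ball (0:Eucl n) 1) (ball (0:Eucl n) 1) := hBij
  obtain ⟨cd⟩ := chainData_of_list L hLrefl
  have hL'refl : ∀ f ∈ L.reverse, IsReflection n f := fun f hf => hLrefl f (List.mem_reverse.1 hf)
  obtain ⟨cd'⟩ := chainData_of_list L.reverse hL'refl
  have hInv : ∀ f ∈ L, Function.Involutive f := fun f hf => isReflection_involutive (hLrefl f hf)
  have hgg' : ∀ z, L.reverse.foldr (· ∘ ·) id ((L.foldr (· ∘ ·) id) z) = z :=
    chain_left_inv hInv
  have hg'g : ∀ z, (L.foldr (· ∘ ·) id) (L.reverse.foldr (· ∘ ·) id z) = z := by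
    intro z
    have h2 := chain_left_inv (L := L.reverse)
      (fun f hf => hInv f (List.mem_reverse.1 hf)) z
    rwa [List.reverse_reverse] at h2
  have hginj : Function.Injective (L.foldr (· ∘ ·) id) := fun u v huv => by
    rw [← hgg' u, huv, hgg' v]
  have hg'inj : Function.Injective (L.reverse.foldr (· ∘ ·) id) := fun u v huv => by
    rw [← hg'g u, huv, hg'g v]
  have hBU : ball (0:Eucl n) 1 ⊆ U := ball_subset_closedBall.trans hUball
  have hφG : ∀ x, x ∈ U → x ∉ cd.E → φ x = cd.G x := by
    intro x hxU hxE
    have h1 := hgU x hxU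
    rw [cd.hfin x hxE] at h1
    exact (OnePoint.coe_eq_coe.1 h1).symm
  -- inputs of chain_gamma for the forward chain
  have mapsB : ∀ x, x ∈ ball (0:Eucl n) 1 → x ∉ cd.E → cd.G x ∈ ball (0:Eucl n) 1 := by
    intro x hx hxE
    rw [← hφG x (hBU hx) hxE]
    exact hBij'.mapsTo hx
  have hsurjB : ∀ w ∈ ball (0:Eucl n) 1, ∃ x ∈ ball (0:Eucl n) 1,
      (L.foldr (· ∘ ·) id) ↑x = ↑w := by
    intro w hw
    obtain ⟨x, hx, hxw⟩ := hBij'.surjOn hw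
    exact ⟨x, hx, by rw [hgU x (hBU hx), hxw]⟩
  obtain ⟨γ, hγpos, hγle, hq⟩ := chain_gamma hn cd mapsB hsurjB hginj
  -- inputs of chain_gamma for the reverse chain
  have mapsB' : ∀ w, w ∈ ball (0:Eucl n) 1 → w ∉ cd'.E → cd'.G w ∈ ball (0:Eucl n) 1 := by
    intro w hw hwE
    obtain ⟨x, hx, hxw⟩ := hBij'.surjOn hw
    have h1 : (L.reverse.foldr (· ∘ ·) id) ↑w = (↑x : EuclHat n) := by
      rw [← hxw, ← hgU x (hBU hx), hgg']
    rw [cd'.hfin w hwE] at h1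
    rw [OnePoint.coe_eq_coe.1 h1]
    exact hx
  have hsurjB' : ∀ w ∈ ball (0:Eucl n) 1, ∃ x ∈ ball (0:Eucl n) 1,
      (L.reverse.foldr (· ∘ ·) id) ↑x = ↑w := by
    intro w hw
    refine ⟨φ w, hBij'.mapsTo hw, ?_⟩
    rw [← hgU w (hBU hw), hgg']
  obtain ⟨γ', hγ'pos, hγ'le, hq'⟩ := chain_gamma hn cd' mapsB' hsurjB' hg'inj
  -- G' ∘ G = id where defined
  have hGG : ∀ z, z ∉ cd.E → cd.G z ∉ cd'.E → cd'.G (cd.G z) = z := by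
    intro z hzE hzE'
    have h1 : (L.reverse.foldr (· ∘ ·) id) ↑(cd.G z) = (↑(cd'.G (cd.G z)) : EuclHat n) :=
      cd'.hfin _ hzE'
    have h2 : (L.reverse.foldr (· ∘ ·) id) ↑(cd.G z) = (↑z : EuclHat n) := by
      rw [← cd.hfin z hzE, hgg']
    exact OnePoint.coe_eq_coe.1 (h1.symm.trans h2)
  -- γ * γ' = 1
  have hγγ' : γ * γ' = 1 := by
    set Ebad : Set (Eucl n) := cd.E ∪ {x | x ∉ cd.E ∧ cd.G x ∈ cd'.E} with hEbaddef
    have hEbadfin : Ebad.Finite := by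
      apply cd.hEfin.union
      apply Set.Finite.of_finite_image (f := cd.G)
      · exact cd'.hEfin.subset (by rintro _ ⟨x, hx, rfl⟩; exact hx.2)
      · exact fun x hx y hy hxy => cd.hGinj x hx.1 y hy.1 hxy
    obtain ⟨x1, hx1, x2, hx2, hx12⟩ := ball_diff_finite_nontrivial hn0 hEbadfin
    have hunpack : ∀ z, z ∈ ball (0:Eucl n) 1 \ Ebad →
        z ∈ ball (0:Eucl n) 1 ∧ z ∉ cd.E ∧ cd.G z ∉ cd'.E := by
      intro z hz
      have hzE : z ∉ cd.E := fun h => hz.2 (Or.inl h)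
      exact ⟨hz.1, hzE, fun h => hz.2 (Or.inr ⟨hzE, h⟩)⟩
    obtain ⟨hx1B, hx1E, hx1E'⟩ := hunpack x1 hx1
    obtain ⟨hx2B, hx2E, hx2E'⟩ := hunpack x2 hx2
    -- pointwise relation γγ' p z = 1
    have hpz : ∀ z, z ∈ ball (0:Eucl n) 1 → z ∉ cd.E → cd.G z ∉ cd'.E →
        γ * γ' * (cd.μ z * cd'.μ (cd.G z)) = 1 := by
      intro z hzB hzE hzE'
      have A := hq z hzE
      have B := hq' (cd.G z) hzE'
      rw [hGG z hzE hzE'] at B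
      have hzn : ‖z‖ < 1 := mem_ball_zero_iff.1 hzB
      have hne : (1 - ‖z‖ ^ 2) ≠ 0 := by
        have : 0 < 1 - ‖z‖ ^ 2 := by nlinarith [norm_nonneg z]
        exact this.ne'
      have e : (γ * γ' * (cd.μ z * cd'.μ (cd.G z))) * (1 - ‖z‖ ^ 2) = 1 * (1 - ‖z‖ ^ 2) := by
        rw [A] at B
        linear_combination (-1 : ℝ) * B
      exact mul_right_cancel₀ hne e
    have hp1 := hpz x1 hx1B hx1E hx1E'
    have hp2 := hpz x2 hx2B hx2E hx2E'
    -- product relation p x1 * p x2 = 1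
    have hpp : (cd.μ x1 * cd'.μ (cd.G x1)) * (cd.μ x2 * cd'.μ (cd.G x2)) = 1 := by
      have C1 := cd.hI1 x1 hx1E x2 hx2E
      have C2 := cd'.hI1 (cd.G x1) hx1E' (cd.G x2) hx2E'
      rw [hGG x1 hx1E hx1E', hGG x2 hx2E hx2E'] at C2
      have hne : ‖x1 - x2‖ ^ 2 ≠ 0 := (norm_sq_pos_of_ne hx12).ne'
      have e : ((cd.μ x1 * cd'.μ (cd.G x1)) * (cd.μ x2 * cd'.μ (cd.G x2))) * ‖x1 - x2‖ ^ 2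
          = 1 * ‖x1 - x2‖ ^ 2 := by
        rw [C1] at C2
        linear_combination (-1 : ℝ) * C2
      exact mul_right_cancel₀ hne e
    -- conclude
    have hpos1 : 0 < cd.μ x1 * cd'.μ (cd.G x1) :=
      mul_pos (cd.hμpos x1 hx1E) (cd'.hμpos _ hx1E')
    have heqp : cd.μ x1 * cd'.μ (cd.G x1) = cd.μ x2 * cd'.μ (cd.G x2) := by
      have hγγpos : 0 < γ * γ' := mul_pos hγpos hγ'pos
      have := hp1.trans hp2.symm
      exact mul_left_cancel₀ hγγpos.ne' this
    have hpone : cd.μ x1 * cd'.μ (cd.G x1) = 1 := by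
      rw [← heqp] at hpp
      have hfactor : (cd.μ x1 * cd'.μ (cd.G x1) - 1) * (cd.μ x1 * cd'.μ (cd.G x1) + 1) = 0 := by
        linear_combination hpp
      rcases mul_eq_zero.1 hfactor with h | h
      · linarith
      · linarith [hpos1]
    rw [hpone, mul_one] at hp1
    exact hp1
  have hγ1 : γ = 1 := by
    have h1 : 0 ≤ γ * (1 - γ') := mul_nonneg hγpos.le (by linarith)
    have h2 : 1 ≤ γ := by nlinarith [hγγ']
    linarith
  have hq1 : ∀ x, x ∉ cd.E → 1 - ‖cd.G x‖ ^ 2 = cd.μ x * (1 - ‖x‖ ^ 2) := by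
    intro x hx
    have h1 := hq x hx
    rw [hγ1, one_mul] at h1
    exact h1
  -- the point a' with φ a' = 0
  obtain ⟨a', ha'B, ha'0⟩ := hBij'.surjOn (show (0:Eucl n) ∈ ball (0:Eucl n) 1 from
    mem_ball_zero_iff.2 (by norm_num))
  have htlt : ‖a'‖ < 1 := mem_ball_zero_iff.1 ha'B
  have ht0 : (0:ℝ) ≤ ‖a'‖ := norm_nonneg a'
  set t : ℝ := ‖a'‖ with ht
  set D : Eucl n → ℝ := fun x => 1 - 2 * ⟪x, a'⟫_ℝ + ‖x‖ ^ 2 * t ^ 2 with hDdef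
  have hDpos : ∀ x : Eucl n, ‖x‖ ≤ 1 → 0 < D x := by
    intro x hx
    have h1 : ⟪x, a'⟫_ℝ ≤ ‖x‖ * t := real_inner_le_norm x a'
    have h2 : ‖x‖ * t ≤ t := mul_le_of_le_one_left ht0 hx
    have h3 : 0 < 1 - ‖x‖ * t := by linarith
    have h4 : 0 < (1 - ‖x‖ * t) * (1 - ‖x‖ * t) := mul_pos h3 h3
    show 0 < 1 - 2 * ⟪x, a'⟫_ℝ + ‖x‖ ^ 2 * t ^ 2
    nlinarith [h1, h4]
  have hDcont : Continuous D := by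
    apply Continuous.add
    · exact continuous_const.sub (continuous_const.mul (continuous_id.inner continuous_const))
    · exact (continuous_norm.pow 2).mul continuous_const
  have ha'U : a' ∈ U := hBU ha'B
  have hGa' : Tendsto cd.G (𝓝[cd.Eᶜ] a') (𝓝 0) := by
    by_cases hE : a' ∈ cd.E
    · exact cd.htends a' hE 0 (by rw [hgU a' ha'U, ha'0])
    · have h1 : Tendsto cd.G (𝓝[cd.Eᶜ] a') (𝓝 (cd.G a')) := cd.hGcont a' hE
      rw [show cd.G a' = 0 from by rw [← hφG a' ha'U hE, ha'0]] at h1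
      exact h1
  have h1t2 : (0:ℝ) < 1 - t ^ 2 := by nlinarith
  -- identity K
  have hK : ∀ x, x ∉ cd.E → ‖cd.G x‖ ^ 2 * (1 - t ^ 2) = cd.μ x * ‖x - a'‖ ^ 2 := by
    intro x hxE
    rcases eq_or_ne x a' with rfl | hxa
    · have hGa'0 : cd.G x = 0 := by rw [← hφG x ha'U hxE, ha'0]
      rw [hGa'0, sub_self]
      simp
    · set Fa := 𝓝[ball (0:Eucl n) 1 \ (cd.E ∪ {x})] a' with hFa
      haveI : Fa.NeBot := mem_closure_iff_nhdsWithin_neBot.1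
        (mem_closure_ball_diff hn0 (cd.hEfin.union (finite_singleton x)) htlt.le)
      have hsub : ball (0:Eucl n) 1 \ (cd.E ∪ {x}) ⊆ cd.Eᶜ :=
        fun y hy hyE => hy.2 (Or.inl hyE)
      have hGt : Tendsto cd.G Fa (𝓝 0) := hGa'.mono_left (nhdsWithin_mono _ hsub)
      have hyt : Tendsto (fun y : Eucl n => y) Fa (𝓝 a') :=
        tendsto_id.mono_right nhdsWithin_le_nhds
      have hμt : Tendsto cd.μ Fa (𝓝 (1 / (1 - t ^ 2))) := by
        have hev : ∀ᶠ y in Fa, (1 - ‖cd.G y‖ ^ 2) / (1 - ‖y‖ ^ 2) = cd.μ y := by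
          apply eventually_mem_nhdsWithin.mono
          intro y hy
          have hyE : y ∉ cd.E := fun h => hy.2 (Or.inl h)
          have hyB : ‖y‖ < 1 := mem_ball_zero_iff.1 hy.1
          have hne : 1 - ‖y‖ ^ 2 ≠ 0 := by
            have : 0 < 1 - ‖y‖ ^ 2 := by nlinarith [norm_nonneg y]
            exact this.ne'
          rw [div_eq_iff hne]
          linarith [hq1 y hyE]
        have hlim : Tendsto (fun y => (1 - ‖cd.G y‖ ^ 2) / (1 - ‖y‖ ^ 2)) Fa
            (𝓝 ((1 - ‖(0:Eucl n)‖ ^ 2) / (1 - ‖a'‖ ^ 2))) := by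
          apply Tendsto.div
          · exact tendsto_const_nhds.sub ((hGt.norm).pow 2)
          · exact tendsto_const_nhds.sub ((hyt.norm).pow 2)
          · exact h1t2.ne'
        have hval : (1 - ‖(0:Eucl n)‖ ^ 2) / (1 - ‖a'‖ ^ 2) = 1 / (1 - t ^ 2) := by
          rw [norm_zero]
          norm_num
          rw [ht]
        rw [hval] at hlim
        exact Tendsto.congr' hev hlim
      have hL1 : Tendsto (fun y => ‖cd.G x - cd.G y‖ ^ 2) Fa (𝓝 (‖cd.G x - 0‖ ^ 2)) :=
        ((tendsto_const_nhds.sub hGt).norm).pow 2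
      have hL2 : Tendsto (fun y => cd.μ x * cd.μ y * ‖x - y‖ ^ 2) Fa
          (𝓝 (cd.μ x * (1 / (1 - t ^ 2)) * ‖x - a'‖ ^ 2)) :=
        (tendsto_const_nhds.mul hμt).mul (((tendsto_const_nhds.sub hyt).norm).pow 2)
      have heq : ∀ᶠ y in Fa, ‖cd.G x - cd.G y‖ ^ 2 = cd.μ x * cd.μ y * ‖x - y‖ ^ 2 :=
        eventually_mem_nhdsWithin.mono
          (fun y hy => cd.hI1 x hxE y (fun h => hy.2 (Or.inl h)))
      have huniq := tendsto_nhds_unique (hL1.congr' heq) hL2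
      rw [sub_zero] at huniq
      rw [huniq]
      field_simp
  have hμD : ∀ x, x ∉ cd.E → cd.μ x * D x = 1 - t ^ 2 := by
    intro x hxE
    have h1 := hq1 x hxE
    have h2 := hK x hxE
    have h3 : ‖x - a'‖ ^ 2 = ‖x‖ ^ 2 - 2 * ⟪x, a'⟫_ℝ + t ^ 2 := by
      rw [norm_sub_sq_real]
    show cd.μ x * (1 - 2 * ⟪x, a'⟫_ℝ + ‖x‖ ^ 2 * t ^ 2) = 1 - t ^ 2
    linear_combination -(1 - t ^ 2) * h1 - h2 - cd.μ x * h3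
  -- φ is a limit of G along the ball off E
  have hφten : ∀ e, e ∈ closedBall (0:Eucl n) 1 →
      Tendsto φ (𝓝[ball (0:Eucl n) 1 \ cd.E] e) (𝓝 (φ e)) := by
    intro e heB
    have heU : e ∈ U := hUball heB
    have hev : ∀ᶠ y in 𝓝[ball (0:Eucl n) 1 \ cd.E] e, cd.G y = φ y :=
      eventually_mem_nhdsWithin.mono (fun y hy => (hφG y (hBU hy.1) hy.2).symm)
    by_cases heE : e ∈ cd.E
    · have h1 := (cd.htends e heE (φ e) (hgU e heU)).mono_left
        (nhdsWithin_mono _ (fun y (hy : y ∈ ball (0:Eucl n) 1 \ cd.E) => hy.2))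
      exact Tendsto.congr' hev h1
    · have h1 : Tendsto cd.G (𝓝[cd.Eᶜ] e) (𝓝 (cd.G e)) := cd.hGcont e heE
      have h2 := h1.mono_left
        (nhdsWithin_mono _ (fun y (hy : y ∈ ball (0:Eucl n) 1 \ cd.E) => hy.2))
      rw [← hφG e heU heE] at h2
      exact Tendsto.congr' hev h2
  -- master identity M1
  have hM1 : ∀ x, x ∈ closedBall (0:Eucl n) 1 →
      (1 - ‖φ x‖ ^ 2) * D x = (1 - t ^ 2) * (1 - ‖x‖ ^ 2) := by
    intro x hxB
    set Fx := 𝓝[ball (0:Eucl n) 1 \ cd.E] x with hFx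
    haveI : Fx.NeBot := mem_closure_iff_nhdsWithin_neBot.1
      (mem_closure_ball_diff hn0 cd.hEfin (mem_closedBall_zero_iff.1 hxB))
    have hxt : Tendsto (fun y : Eucl n => y) Fx (𝓝 x) :=
      tendsto_id.mono_right nhdsWithin_le_nhds
    have hf1 : Tendsto (fun y => (1 - ‖φ y‖ ^ 2) * D y) Fx (𝓝 ((1 - ‖φ x‖ ^ 2) * D x)) :=
      (tendsto_const_nhds.sub (((hφten x hxB).norm).pow 2)).mul
        ((hDcont.tendsto x).comp hxt)
    have hf2 : Tendsto (fun y : Eucl n => (1 - t ^ 2) * (1 - ‖y‖ ^ 2)) Fx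
        (𝓝 ((1 - t ^ 2) * (1 - ‖x‖ ^ 2))) :=
      tendsto_const_nhds.mul (tendsto_const_nhds.sub ((hxt.norm).pow 2))
    have hev : ∀ᶠ y in Fx, (1 - ‖φ y‖ ^ 2) * D y = (1 - t ^ 2) * (1 - ‖y‖ ^ 2) := by
      apply eventually_mem_nhdsWithin.mono
      intro y hy
      rw [hφG y (hBU hy.1) hy.2]
      have h1 := hq1 y hy.2
      have h2 := hμD y hy.2
      linear_combination D y * h1 + (1 - ‖y‖ ^ 2) * h2
    exact tendsto_nhds_unique (hf1.congr' hev) hf2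
  -- master identity M2
  have hM2 : ∀ x, x ∈ closedBall (0:Eucl n) 1 → ∀ y, y ∈ closedBall (0:Eucl n) 1 →
      ‖φ x - φ y‖ ^ 2 * (D x * D y) = (1 - t ^ 2) ^ 2 * ‖x - y‖ ^ 2 := by
    intro x hxB y hyB
    set Fx := 𝓝[ball (0:Eucl n) 1 \ cd.E] x with hFx
    set Fy := 𝓝[ball (0:Eucl n) 1 \ cd.E] y with hFy
    haveI : Fx.NeBot := mem_closure_iff_nhdsWithin_neBot.1
      (mem_closure_ball_diff hn0 cd.hEfin (mem_closedBall_zero_iff.1 hxB))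
    haveI : Fy.NeBot := mem_closure_iff_nhdsWithin_neBot.1
      (mem_closure_ball_diff hn0 cd.hEfin (mem_closedBall_zero_iff.1 hyB))
    set Fp := Fx ×ˢ Fy with hFp
    haveI : Fp.NeBot := Filter.prod_neBot.2 ⟨inferInstance, inferInstance⟩
    have hfst : Tendsto (fun p : Eucl n × Eucl n => p.1) Fp (𝓝 x) :=
      tendsto_fst.mono_right nhdsWithin_le_nhds
    have hsnd : Tendsto (fun p : Eucl n × Eucl n => p.2) Fp (𝓝 y) :=
      tendsto_snd.mono_right nhdsWithin_le_nhds
    have hφ1 : Tendsto (fun p : Eucl n × Eucl n => φ p.1) Fp (𝓝 (φ x)) :=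
      (hφten x hxB).comp tendsto_fst
    have hφ2 : Tendsto (fun p : Eucl n × Eucl n => φ p.2) Fp (𝓝 (φ y)) :=
      (hφten y hyB).comp tendsto_snd
    have hf1 : Tendsto (fun p : Eucl n × Eucl n => ‖φ p.1 - φ p.2‖ ^ 2 * (D p.1 * D p.2))
        Fp (𝓝 (‖φ x - φ y‖ ^ 2 * (D x * D y))) :=
      (((hφ1.sub hφ2).norm).pow 2).mul
        (((hDcont.tendsto x).comp hfst).mul ((hDcont.tendsto y).comp hsnd))
    have hf2 : Tendsto (fun p : Eucl n × Eucl n => (1 - t ^ 2) ^ 2 * ‖p.1 - p.2‖ ^ 2)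
        Fp (𝓝 ((1 - t ^ 2) ^ 2 * ‖x - y‖ ^ 2)) :=
      tendsto_const_nhds.mul (((hfst.sub hsnd).norm).pow 2)
    have hm : (ball (0:Eucl n) 1 \ cd.E) ×ˢ (ball (0:Eucl n) 1 \ cd.E) ∈ Fp :=
      prod_mem_prod self_mem_nhdsWithin self_mem_nhdsWithin
    have hev : ∀ᶠ p in Fp, ‖φ p.1 - φ p.2‖ ^ 2 * (D p.1 * D p.2)
        = (1 - t ^ 2) ^ 2 * ‖p.1 - p.2‖ ^ 2 := by
      apply eventually_of_mem hm
      rintro ⟨u, v⟩ ⟨hu, hv⟩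
      simp only
      rw [hφG u (hBU hu.1) hu.2, hφG v (hBU hv.1) hv.2]
      have A := cd.hI1 u hu.2 v hv.2
      have B := hμD u hu.2
      have C := hμD v hv.2
      linear_combination (D u * D v) * A + ‖u - v‖ ^ 2 * (cd.μ v * D v) * B
        + ‖u - v‖ ^ 2 * (1 - t ^ 2) * C
    exact tendsto_nhds_unique (hf1.congr' hev) hf2
  -- ‖φ 0‖ = t
  have hφ0 : ‖φ 0‖ = t := by
    have h1 := hM1 0 (mem_closedBall_zero_iff.2 (by norm_num))
    have hD0 : D 0 = 1 := by
      show 1 - 2 * ⟪(0:Eucl n), a'⟫_ℝ + ‖(0:Eucl n)‖ ^ 2 * t ^ 2 = 1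
      rw [inner_zero_left, norm_zero]
      ring
    rw [hD0, mul_one, norm_zero] at h1
    have h2 : ‖φ 0‖ ^ 2 = t ^ 2 := by nlinarith [h1]
    exact norm_eq_of_sq_eq (norm_nonneg _) ht0 h2
  -- final: the inclusion
  rintro _ ⟨x, hxΓ, rfl⟩
  obtain ⟨hxB', hxineq⟩ := hxΓ
  have hxB : x ∈ ball (0:Eucl n) 1 := hxB'
  have hζS : ‖ζ‖ = 1 := mem_sphere_zero_iff_norm.1 hζ
  have hφxB : φ x ∈ ball (0:Eucl n) 1 := hBij'.mapsTo hxB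
  refine ⟨hφxB, ?_⟩
  have hxC : x ∈ closedBall (0:Eucl n) 1 := ball_subset_closedBall hxB
  have hζC : ζ ∈ closedBall (0:Eucl n) 1 := mem_closedBall_zero_iff.2 hζS.le
  have hDx := hDpos x (mem_closedBall_zero_iff.1 hxC)
  have hDζ := hDpos ζ hζS.le
  have hM2x := hM2 x hxC ζ hζC
  have hM1x := hM1 x hxC
  have hφxn : ‖φ x‖ < 1 := mem_ball_zero_iff.1 hφxB
  have hApos : 0 < 1 - ‖φ x‖ ^ 2 := by nlinarith [norm_nonneg (φ x)]
  have hxn : ‖x‖ < 1 := mem_ball_zero_iff.1 hxB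
  have hδ0 : (0:ℝ) < δ := by linarith
  have h1t : (0:ℝ) < 1 - t := by linarith
  -- bounds on D
  have hDxU : D x ≤ (1 + t) ^ 2 := by
    have h1 : -⟪x, a'⟫_ℝ ≤ ‖x‖ * t := by
      have := abs_real_inner_le_norm x a'
      rw [← ht] at this
      cases abs_le.1 this with
      | intro hl hr => linarith
    have h2 : ‖x‖ * t ≤ t := mul_le_of_le_one_left ht0 hxn.le
    show 1 - 2 * ⟪x, a'⟫_ℝ + ‖x‖ ^ 2 * t ^ 2 ≤ (1 + t) ^ 2
    nlinarith [h1, h2, mul_nonneg (norm_nonneg x) ht0]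
  have hDζL : (1 - t) ^ 2 ≤ D ζ := by
    have h1 : ⟪ζ, a'⟫_ℝ ≤ ‖ζ‖ * t := real_inner_le_norm ζ a'
    rw [hζS, one_mul] at h1
    show (1 - t) ^ 2 ≤ 1 - 2 * ⟪ζ, a'⟫_ℝ + ‖ζ‖ ^ 2 * t ^ 2
    rw [hζS]
    nlinarith [h1]
  -- the strict inequality chain
  have hMlt : ‖x - ζ‖ < δ / 2 * (1 - ‖x‖ ^ 2) := hxineq
  have e1 : ‖φ x - φ ζ‖ ^ 2 * (D x * D ζ) < (1 - t ^ 2) ^ 2 * (δ / 2 * (1 - ‖x‖ ^ 2)) ^ 2 := by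
    rw [hM2x]
    have h2 : ‖x - ζ‖ ^ 2 < (δ / 2 * (1 - ‖x‖ ^ 2)) ^ 2 := by
      nlinarith [norm_nonneg (x - ζ), hMlt]
    exact mul_lt_mul_of_pos_left h2 (pow_pos h1t2 2)
  have e2 : ((1 - t ^ 2) * (1 - ‖x‖ ^ 2)) ^ 2 = ((1 - ‖φ x‖ ^ 2) * D x) ^ 2 := by
    rw [hM1x]
  have e3 : ‖φ x - φ ζ‖ ^ 2 * (D x * D ζ)
      < (δ / 2) ^ 2 * (1 - ‖φ x‖ ^ 2) ^ 2 * D x ^ 2 := by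
    calc ‖φ x - φ ζ‖ ^ 2 * (D x * D ζ)
        < (1 - t ^ 2) ^ 2 * (δ / 2 * (1 - ‖x‖ ^ 2)) ^ 2 := e1
      _ = (δ / 2) ^ 2 * ((1 - t ^ 2) * (1 - ‖x‖ ^ 2)) ^ 2 := by ring
      _ = (δ / 2) ^ 2 * ((1 - ‖φ x‖ ^ 2) * D x) ^ 2 := by rw [e2]
      _ = (δ / 2) ^ 2 * (1 - ‖φ x‖ ^ 2) ^ 2 * D x ^ 2 := by ring
  have e4 : ‖φ x - φ ζ‖ ^ 2 * D ζ < (δ / 2) ^ 2 * (1 - ‖φ x‖ ^ 2) ^ 2 * D x := by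
    have h5 : (‖φ x - φ ζ‖ ^ 2 * D ζ) * D x
        < ((δ / 2) ^ 2 * (1 - ‖φ x‖ ^ 2) ^ 2 * D x) * D x := by
      calc (‖φ x - φ ζ‖ ^ 2 * D ζ) * D x = ‖φ x - φ ζ‖ ^ 2 * (D x * D ζ) := by ring
        _ < (δ / 2) ^ 2 * (1 - ‖φ x‖ ^ 2) ^ 2 * D x ^ 2 := e3
        _ = ((δ / 2) ^ 2 * (1 - ‖φ x‖ ^ 2) ^ 2 * D x) * D x := by ring
    exact lt_of_mul_lt_mul_right h5 hDx.le
  have e5 : ‖φ x - φ ζ‖ ^ 2 * D ζ < (δ / 2) ^ 2 * (1 - ‖φ x‖ ^ 2) ^ 2 * (1 + t) ^ 2 := by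
    have h6 : (δ / 2) ^ 2 * (1 - ‖φ x‖ ^ 2) ^ 2 * D x
        ≤ (δ / 2) ^ 2 * (1 - ‖φ x‖ ^ 2) ^ 2 * (1 + t) ^ 2 := by
      apply mul_le_mul_of_nonneg_left hDxU
      positivity
    linarith
  have e6 : ‖φ x - φ ζ‖ ^ 2 * (1 - t) ^ 2 < (δ / 2) ^ 2 * (1 - ‖φ x‖ ^ 2) ^ 2 * (1 + t) ^ 2 := by
    have h7 : ‖φ x - φ ζ‖ ^ 2 * (1 - t) ^ 2 ≤ ‖φ x - φ ζ‖ ^ 2 * D ζ := by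
      apply mul_le_mul_of_nonneg_left hDζL
      positivity
    exact lt_of_le_of_lt h7 e5
  -- conclude
  have hC : (0:ℝ) < δ * (1 + t) / (1 - t) / 2 * (1 - ‖φ x‖ ^ 2) := by positivity
  rw [hφ0]
  by_contra hcon
  push_neg at hcon
  have h8 : (δ * (1 + t) / (1 - t) / 2 * (1 - ‖φ x‖ ^ 2)) ^ 2 ≤ ‖φ x - φ ζ‖ ^ 2 :=
    pow_le_pow_left₀ hC.le hcon 2
  have h9 : (δ * (1 + t) / (1 - t) / 2 * (1 - ‖φ x‖ ^ 2)) ^ 2 * (1 - t) ^ 2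
      = (δ / 2) ^ 2 * (1 - ‖φ x‖ ^ 2) ^ 2 * (1 + t) ^ 2 := by
    field_simp
  have h10 : (δ * (1 + t) / (1 - t) / 2 * (1 - ‖φ x‖ ^ 2)) ^ 2 * (1 - t) ^ 2
      ≤ ‖φ x - φ ζ‖ ^ 2 * (1 - t) ^ 2 :=
    mul_le_mul_of_nonneg_right h8 (sq_nonneg _)
  linarith [h10, e6, h9]
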